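/- arXiv:1611.04831 — 9 statements merged into one kernel-verified Lean document; each statement's English description precedes it below -/
import Mathlib

section
/- Let d ≥ 1, let f : ℝ^d → ℝ be β-smooth with β > 0, and let η, θ > 0 satisfy η² + d·θ² ≤ η^{3/2}. Let x₀ ∈ ℝ^d with g₀ = ∇f(x₀) satisfying ‖g₀‖ ≥ β·√η (in particular g₀ ≠ 0), and let μ be the standard Gaussian measure on ℝ^d (the product over the d coordinates of the real Gaussian with mean 0 and variance 1). Then ∫ f(x₀ − η·g₀/‖g₀‖ + θ·n) dμ(n) − f(x₀) ≤ −β·η^{3/2}/2. -/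
open MeasureTheory ProbabilityTheory
open scoped RealInnerProductSpace

noncomputable section

/-- `ℝ^d` as Euclidean space. -/
abbrev Euc (d : ℕ) := EuclideanSpace ℝ (Fin d)

/-- `f` is differentiable and `β`-smooth: gradients are `β`-Lipschitz. -/
def IsSmoothFn {d : ℕ} (β : ℝ) (f : Euc d → ℝ) : Prop :=
  Differentiable ℝ f ∧ ∀ x y : Euc d, ‖gradient f x - gradient f y‖ ≤ β * ‖x - y‖

/-- The Hessian of `f` at `x`, as a continuous linear map. -/
def hessianCLM {d : ℕ} (f : Euc d → ℝ) (x : Euc d) : Euc d →L[ℝ] Euc d :=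
  fderiv ℝ (gradient f) x

/-- `f` is twice differentiable with `ρ`-Lipschitz Hessians (operator norm). -/
def HasLipschitzHessianFn {d : ℕ} (ρ : ℝ) (f : Euc d → ℝ) : Prop :=
  Differentiable ℝ f ∧ Differentiable ℝ (gradient f) ∧
    ∀ x y : Euc d, ‖hessianCLM f x - hessianCLM f y‖ ≤ ρ * ‖x - y‖

/-- `f` is `α`-strongly convex on the set `S`. -/
def StrongConvexOnSet {d : ℕ} (α : ℝ) (S : Set (Euc d)) (f : Euc d → ℝ) : Prop :=
  ∀ x ∈ S, ∀ y ∈ S, f y - f x ≥ ⟪gradient f x, y - x⟫ + α / 2 * ‖x - y‖ ^ 2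

/-- The `(α, γ, ν, r)`-strict-saddle property: at every point, either the gradient is
large, or the Hessian has an eigenvalue at most `-γ` (witnessed by a unit vector whose
quadratic form is at most `-γ`), or the point is `r`-close to a local minimum around which
`f` is `α`-strongly convex in a `2r`-ball. -/
def StrictSaddleFn {d : ℕ} (α γ ν r : ℝ) (f : Euc d → ℝ) : Prop :=
  ∀ x : Euc d,
    ν ≤ ‖gradient f x‖ ∨
    (∃ v : Euc d, ‖v‖ = 1 ∧ ⟪v, hessianCLM f x v⟫ ≤ -γ) ∨
    (∃ xs : Euc d, IsLocalMin f xs ∧ ‖x - xs‖ ≤ r ∧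
      StrongConvexOnSet α (Metric.closedBall xs (2 * r)) f)

/-- The standard Gaussian measure on `ℝ^d` (product of `d` standard real Gaussians). -/
def stdGaussian (d : ℕ) : Measure (Euc d) :=
  (Measure.pi fun _ : Fin d => gaussianReal 0 1).map
    (MeasurableEquiv.toLp 2 (Fin d → ℝ))

/-- The Saddle-NGD recursion: `X 0 = x₀` and
`X (t+1) = X t − η ∇f(X t)/‖∇f(X t)‖ + θ 1_{N₀ ∣ t} Noise t`
(with the convention that the normalized gradient is `0` when the gradient vanishes). -/
def IsSNGD {d : ℕ} {Ω : Type*} (f : Euc d → ℝ) (η θ : ℝ) (N₀ : ℕ) (x₀ : Euc d)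
    (Noise : ℕ → Ω → Euc d) (X : ℕ → Ω → Euc d) : Prop :=
  (∀ ω, X 0 ω = x₀) ∧
  ∀ t ω, X (t + 1) ω =
    X t ω - (η * ‖gradient f (X t ω)‖⁻¹) • gradient f (X t ω)
      + (if N₀ ∣ t then θ else 0) • Noise t ω


/-! ### Auxiliary lemmas -/

open Real Set Filter Topology
open scoped ENNReal NNReal

section RealLine

lemma SNGD_hE' (x : ℝ) : HasDerivAt (fun y : ℝ => Real.exp (-(1/2) * y ^ 2))
    (-x * Real.exp (-(1/2) * x ^ 2)) x := by
  have h := ((hasDerivAt_pow 2 x).const_mul (-(1/2) : ℝ)).exp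
  convert h using 1
  ring_nf

lemma SNGD_hF' (x : ℝ) : HasDerivAt (fun y : ℝ => -(y * Real.exp (-(1/2) * y ^ 2)))
    (x ^ 2 * Real.exp (-(1/2) * x ^ 2) - Real.exp (-(1/2) * x ^ 2)) x := by
  have h := ((hasDerivAt_id x).mul (SNGD_hE' x)).neg
  exact h.congr_deriv (by simp only [id]; ring)

lemma SNGD_int_sq : Integrable (fun x : ℝ => x ^ 2 * Real.exp (-(1/2) * x ^ 2)) := by
  have := integrable_rpow_mul_exp_neg_mul_sq (b := 1/2) (by norm_num) (s := 2) (by norm_num)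
  simpa [Real.rpow_natCast] using this

lemma SNGD_int_E : Integrable (fun x : ℝ => Real.exp (-(1/2) * x ^ 2)) :=
  integrable_exp_neg_mul_sq (by norm_num)

lemma SNGD_gtop : Tendsto (fun x : ℝ => x * Real.exp (-(1/2) * x ^ 2)) atTop (nhds 0) := by
  have h := rpow_mul_exp_neg_mul_sq_isLittleO_exp_neg (b := 1/2) (by norm_num) (s := 1)
  have hexp : Tendsto (fun x : ℝ => Real.exp (-(1/2) * x)) atTop (nhds 0) := by
    have hlin : Tendsto (fun x : ℝ => -(1/2) * x) atTop atBot :=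
      (tendsto_id (α := ℝ)).const_mul_atTop_of_neg (by norm_num : (-(1/2) : ℝ) < 0)
    exact Real.tendsto_exp_atBot.comp hlin
  have h2 := h.isBigO.trans_tendsto hexp
  simpa [Real.rpow_one] using h2

lemma SNGD_gbot : Tendsto (fun x : ℝ => x * Real.exp (-(1/2) * x ^ 2)) atBot (nhds 0) := by
  have h := (SNGD_gtop.comp tendsto_neg_atBot_atTop).neg
  rw [neg_zero] at h
  exact h.congr (fun x => by simp [Function.comp, neg_sq])

lemma SNGD_L1 : ∫ x : ℝ, x * Real.exp (-(1/2) * x ^ 2) = 0 := by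
  have h := (Measure.measurePreserving_neg (volume : Measure ℝ)).integral_comp
    (Homeomorph.neg ℝ).measurableEmbedding (fun x => x * Real.exp (-(1/2) * x ^ 2))
  have h2 : ∫ x : ℝ, (-x) * Real.exp (-(1/2) * (-x) ^ 2)
      = ∫ x : ℝ, x * Real.exp (-(1/2) * x ^ 2) := h
  simp only [neg_sq, neg_mul] at h2
  rw [integral_neg] at h2
  simp only [neg_mul]
  linarith

lemma SNGD_L2 : ∫ x : ℝ, x ^ 2 * Real.exp (-(1/2) * x ^ 2)
    = ∫ x : ℝ, Real.exp (-(1/2) * x ^ 2) := by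
  have hint : Integrable
      (fun x : ℝ => x ^ 2 * Real.exp (-(1/2) * x ^ 2) - Real.exp (-(1/2) * x ^ 2)) :=
    SNGD_int_sq.sub SNGD_int_E
  have hIoi : ∫ x in Ioi (0:ℝ),
      (x ^ 2 * Real.exp (-(1/2) * x ^ 2) - Real.exp (-(1/2) * x ^ 2)) = 0 := by
    have h := integral_Ioi_of_hasDerivAt_of_tendsto' (a := 0)
      (f := fun y : ℝ => -(y * Real.exp (-(1/2) * y ^ 2)))
      (fun x _ => SNGD_hF' x) hint.integrableOn (by simpa using SNGD_gtop.neg)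
    simpa using h
  have hIic : ∫ x in Iic (0:ℝ),
      (x ^ 2 * Real.exp (-(1/2) * x ^ 2) - Real.exp (-(1/2) * x ^ 2)) = 0 := by
    have h := integral_Iic_of_hasDerivAt_of_tendsto' (a := 0)
      (f := fun y : ℝ => -(y * Real.exp (-(1/2) * y ^ 2)))
      (fun x _ => SNGD_hF' x) hint.integrableOn (by simpa using SNGD_gbot.neg)
    simpa using h
  have hsum := intervalIntegral.integral_Iic_add_Ioi (b := (0:ℝ))
    hint.integrableOn hint.integrableOn
  rw [hIic, hIoi] at hsum
  have h0 : ∫ x : ℝ,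
      (x ^ 2 * Real.exp (-(1/2) * x ^ 2) - Real.exp (-(1/2) * x ^ 2)) = 0 := by linarith
  rw [integral_sub SNGD_int_sq SNGD_int_E] at h0
  linarith

end RealLine

section Gauss

lemma SNGD_gauss_eq_wd : gaussianReal 0 1 =
    volume.withDensity (fun x => ((gaussianPDFReal 0 1 x).toNNReal : ℝ≥0∞)) := by
  rw [gaussianReal_of_var_ne_zero 0 one_ne_zero]
  rfl

lemma SNGD_pdf_meas : Measurable (fun x => (gaussianPDFReal 0 1 x).toNNReal) :=
  (measurable_gaussianPDFReal 0 1).real_toNNReal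

lemma SNGD_gauss_integral (g : ℝ → ℝ) :
    ∫ x, g x ∂(gaussianReal 0 1) = ∫ x, gaussianPDFReal 0 1 x * g x := by
  rw [SNGD_gauss_eq_wd, integral_withDensity_eq_integral_smul SNGD_pdf_meas]
  congr 1; funext x
  simp [NNReal.smul_def, Real.coe_toNNReal _ (gaussianPDFReal_nonneg 0 1 x)]

lemma SNGD_gauss_integrable_iff (g : ℝ → ℝ) :
    Integrable g (gaussianReal 0 1) ↔ Integrable (fun x => gaussianPDFReal 0 1 x * g x) := by
  rw [SNGD_gauss_eq_wd, integrable_withDensity_iff_integrable_smul SNGD_pdf_meas]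
  constructor <;> intro h <;> refine h.congr (Eventually.of_forall fun x => ?_) <;>
    simp [NNReal.smul_def, Real.coe_toNNReal _ (gaussianPDFReal_nonneg 0 1 x)]

lemma SNGD_pdf_eq (x : ℝ) : gaussianPDFReal 0 1 x
    = (Real.sqrt (2 * Real.pi))⁻¹ * Real.exp (-(1/2) * x ^ 2) := by
  simp only [gaussianPDFReal, NNReal.coe_one, mul_one, sub_zero]
  congr 1
  ring_nf

lemma SNGD_integrable_id_gauss : Integrable (fun x : ℝ => x) (gaussianReal 0 1) := by
  rw [SNGD_gauss_integrable_iff]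
  have h := (integrable_mul_exp_neg_mul_sq (b := 1/2) (by norm_num)).const_mul
    ((Real.sqrt (2 * Real.pi))⁻¹)
  refine h.congr (Filter.Eventually.of_forall fun x => ?_)
  simp only [SNGD_pdf_eq]; ring

lemma SNGD_integrable_sq_gauss : Integrable (fun x : ℝ => x ^ 2) (gaussianReal 0 1) := by
  rw [SNGD_gauss_integrable_iff]
  refine (SNGD_int_sq.const_mul ((Real.sqrt (2 * Real.pi))⁻¹)).congr
    (Filter.Eventually.of_forall fun x => ?_)
  simp only [SNGD_pdf_eq]; ring

lemma SNGD_integral_id_gauss : ∫ x, x ∂(gaussianReal 0 1) = 0 := by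
  rw [SNGD_gauss_integral]
  have h : ∀ x : ℝ, gaussianPDFReal 0 1 x * x
      = (Real.sqrt (2 * Real.pi))⁻¹ * (x * Real.exp (-(1/2) * x ^ 2)) := by
    intro x; simp only [SNGD_pdf_eq]; ring
  simp_rw [h]
  rw [integral_const_mul, SNGD_L1, mul_zero]

lemma SNGD_integral_sq_gauss : ∫ x, x ^ 2 ∂(gaussianReal 0 1) = 1 := by
  rw [SNGD_gauss_integral]
  have h : ∀ x : ℝ, gaussianPDFReal 0 1 x * x ^ 2
      = (Real.sqrt (2 * Real.pi))⁻¹ * (x ^ 2 * Real.exp (-(1/2) * x ^ 2)) := by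
    intro x; simp only [SNGD_pdf_eq]; ring
  simp_rw [h]
  rw [integral_const_mul, SNGD_L2]
  have h1 := integral_gaussianPDFReal_eq_one 0 (v := 1) one_ne_zero
  rw [show (fun x => gaussianPDFReal 0 1 x)
      = fun x => (Real.sqrt (2 * Real.pi))⁻¹ * Real.exp (-(1/2) * x ^ 2)
    from funext SNGD_pdf_eq] at h1
  rwa [integral_const_mul] at h1

end Gauss

section PiMeasure

lemma SNGD_pi_map_eval {ι : Type*} [Fintype ι] [DecidableEq ι] {α : ι → Type*}
    [∀ i, MeasurableSpace (α i)]
    (μ : ∀ i, Measure (α i)) [∀ i, SigmaFinite (μ i)] [∀ i, IsProbabilityMeasure (μ i)] (i : ι) :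
    (Measure.pi μ).map (Function.eval i) = μ i := by
  ext s hs
  rw [Measure.map_apply (measurable_pi_apply i) hs, Set.eval_preimage, Measure.pi_pi]
  rw [Fintype.prod_eq_single i (fun j hj => by simp [Function.update_of_ne hj])]
  simp

lemma SNGD_measurePreserving_eval {ι : Type*} [Fintype ι] [DecidableEq ι] {α : ι → Type*}
    [∀ i, MeasurableSpace (α i)]
    (μ : ∀ i, Measure (α i)) [∀ i, SigmaFinite (μ i)] [∀ i, IsProbabilityMeasure (μ i)] (i : ι) :
    MeasurePreserving (Function.eval i) (Measure.pi μ) (μ i) :=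
  ⟨measurable_pi_apply i, SNGD_pi_map_eval μ i⟩

abbrev SNGD_piG (d : ℕ) : Measure (Fin d → ℝ) := Measure.pi fun _ : Fin d => gaussianReal 0 1

lemma SNGD_integrable_eval_comp {d : ℕ} (i : Fin d) {g : ℝ → ℝ}
    (hg : Integrable g (gaussianReal 0 1)) :
    Integrable (fun y : Fin d → ℝ => g (y i)) (SNGD_piG d) :=
  ((SNGD_measurePreserving_eval (fun _ : Fin d => gaussianReal 0 1) i).integrable_comp
    hg.aestronglyMeasurable).mpr hg

lemma SNGD_integral_eval_comp {d : ℕ} (i : Fin d) {g : ℝ → ℝ}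
    (hg : AEStronglyMeasurable g (gaussianReal 0 1)) :
    ∫ y : Fin d → ℝ, g (y i) ∂(SNGD_piG d) = ∫ x, g x ∂(gaussianReal 0 1) := by
  rw [← SNGD_pi_map_eval (fun _ : Fin d => gaussianReal 0 1) i]
  exact (integral_map (measurable_pi_apply i).aemeasurable
    (by rwa [SNGD_pi_map_eval (fun _ : Fin d => gaussianReal 0 1) i])).symm

end PiMeasure

section StdGaussian

variable {d : ℕ}

instance SNGD_instProb : IsProbabilityMeasure (stdGaussian d) := by
  rw [_root_.stdGaussian]
  exact Measure.isProbabilityMeasure_map (MeasurableEquiv.measurable _).aemeasurable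

lemma SNGD_std_integral_eq (G : Euc d → ℝ) :
    ∫ n, G n ∂(stdGaussian d)
      = ∫ y : Fin d → ℝ, G ((MeasurableEquiv.toLp 2 (Fin d → ℝ)) y) ∂(SNGD_piG d) := by
  rw [_root_.stdGaussian, integral_map_equiv]

lemma SNGD_std_integrable_iff (G : Euc d → ℝ) :
    Integrable G (stdGaussian d) ↔
      Integrable (fun y : Fin d → ℝ => G ((MeasurableEquiv.toLp 2 (Fin d → ℝ)) y))
        (SNGD_piG d) := by
  rw [_root_.stdGaussian, integrable_map_equiv]
  rfl

lemma SNGD_inner_coords (w : Euc d) (y : Fin d → ℝ) :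
    ⟪w, ((MeasurableEquiv.toLp 2 (Fin d → ℝ)) y : Euc d)⟫ = ∑ i, w i * y i := by
  simp [PiLp.inner_apply, RCLike.inner_apply, conj_trivial]
  exact Finset.sum_congr rfl (fun i _ => mul_comm _ _)

lemma SNGD_normsq_coords (y : Fin d → ℝ) :
    ‖((MeasurableEquiv.toLp 2 (Fin d → ℝ)) y : Euc d)‖ ^ 2 = ∑ i, (y i) ^ 2 := by
  rw [EuclideanSpace.norm_eq, Real.sq_sqrt (by positivity)]
  simp only [Real.norm_eq_abs, sq_abs]
  rfl

lemma SNGD_std_inner_integrable (w : Euc d) :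
    Integrable (fun n : Euc d => ⟪w, n⟫) (stdGaussian d) := by
  rw [SNGD_std_integrable_iff]
  have h : (fun y : Fin d → ℝ =>
      ⟪w, ((MeasurableEquiv.toLp 2 (Fin d → ℝ)) y : Euc d)⟫)
      = fun y => ∑ i, w i * y i := funext (SNGD_inner_coords w)
  rw [h]
  exact integrable_finset_sum _
    (fun i _ => SNGD_integrable_eval_comp i (SNGD_integrable_id_gauss.const_mul (w i)))

lemma SNGD_std_inner_integral (w : Euc d) :
    ∫ n, ⟪w, n⟫ ∂(stdGaussian d) = 0 := by
  rw [SNGD_std_integral_eq]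
  have h : (fun y : Fin d → ℝ =>
      ⟪w, ((MeasurableEquiv.toLp 2 (Fin d → ℝ)) y : Euc d)⟫)
      = fun y => ∑ i, w i * y i := funext (SNGD_inner_coords w)
  rw [h]
  rw [integral_finset_sum _
    (fun i _ => SNGD_integrable_eval_comp i (SNGD_integrable_id_gauss.const_mul (w i)))]
  refine Finset.sum_eq_zero fun i _ => ?_
  have h2 := SNGD_integral_eval_comp (d := d) i (g := fun x => w i * x)
    ((measurable_id.const_mul (w i)).aestronglyMeasurable)
  rw [h2, integral_const_mul, SNGD_integral_id_gauss, mul_zero]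

lemma SNGD_std_normsq_integrable :
    Integrable (fun n : Euc d => ‖n‖ ^ 2) (stdGaussian d) := by
  rw [SNGD_std_integrable_iff]
  have h : (fun y : Fin d → ℝ =>
      ‖((MeasurableEquiv.toLp 2 (Fin d → ℝ)) y : Euc d)‖ ^ 2)
      = fun y => ∑ i, (y i) ^ 2 := funext SNGD_normsq_coords
  rw [h]
  exact integrable_finset_sum _
    (fun i _ => SNGD_integrable_eval_comp i SNGD_integrable_sq_gauss)

lemma SNGD_std_normsq_integral :
    ∫ n, ‖n‖ ^ 2 ∂(stdGaussian d) = (d : ℝ) := by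
  rw [SNGD_std_integral_eq]
  have h : (fun y : Fin d → ℝ =>
      ‖((MeasurableEquiv.toLp 2 (Fin d → ℝ)) y : Euc d)‖ ^ 2)
      = fun y => ∑ i, (y i) ^ 2 := funext SNGD_normsq_coords
  rw [h]
  rw [integral_finset_sum _
    (fun i _ => SNGD_integrable_eval_comp i SNGD_integrable_sq_gauss)]
  have h2 : ∀ i : Fin d, ∫ y : Fin d → ℝ, (y i) ^ 2 ∂(SNGD_piG d) = 1 := by
    intro i
    rw [SNGD_integral_eval_comp (d := d) i (g := fun x => x ^ 2)
      ((measurable_id.pow_const 2).aestronglyMeasurable), SNGD_integral_sq_gauss]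
  simp [h2]

end StdGaussian

section Descent

variable {F : Type*} [NormedAddCommGroup F] [InnerProductSpace ℝ F] [CompleteSpace F]

lemma SNGD_deriv_along {f : F → ℝ} (hf : Differentiable ℝ f) (x v : F) (t : ℝ) :
    HasDerivAt (fun t : ℝ => f (x + t • v)) ⟪gradient f (x + t • v), v⟫ t := by
  have hc : HasDerivAt (fun t : ℝ => x + t • v) v t := by
    simpa using ((hasDerivAt_id t).smul_const v).const_add x
  have hF : HasFDerivAt f (InnerProductSpace.toDualMap ℝ F (gradient f (x + t • v)))
      (x + t • v) :=
    hasGradientAt_iff_hasFDerivAt.mp (hf (x + t • v)).hasGradientAt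
  exact hF.comp_hasDerivAt t hc

lemma SNGD_descent_upper {β : ℝ} {f : F → ℝ} (hf : Differentiable ℝ f)
    (hlip : ∀ x y : F, ‖gradient f x - gradient f y‖ ≤ β * ‖x - y‖) (x v : F) :
    f (x + v) ≤ f x + ⟪gradient f x, v⟫ + β / 2 * ‖v‖ ^ 2 := by
  set g : ℝ → ℝ := fun t => f (x + t • v) - t * ⟪gradient f x, v⟫ - β / 2 * ‖v‖ ^ 2 * t ^ 2
    with hg
  have hderiv : ∀ t : ℝ, HasDerivAt g
      (⟪gradient f (x + t • v), v⟫ - ⟪gradient f x, v⟫ - β * ‖v‖ ^ 2 * t) t := by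
    intro t
    have h1 := SNGD_deriv_along hf x v t
    have h2 : HasDerivAt (fun t : ℝ => t * ⟪gradient f x, v⟫) ⟪gradient f x, v⟫ t := by
      simpa using (hasDerivAt_id t).mul_const ⟪gradient f x, v⟫
    have h3 : HasDerivAt (fun t : ℝ => β / 2 * ‖v‖ ^ 2 * t ^ 2) (β * ‖v‖ ^ 2 * t) t := by
      have := (hasDerivAt_pow 2 t).const_mul (β / 2 * ‖v‖ ^ 2)
      exact this.congr_deriv (by push_cast; ring)
    exact (h1.sub h2).sub h3
  have hanti : AntitoneOn g (Set.Icc (0:ℝ) 1) := by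
    apply antitoneOn_of_deriv_nonpos (convex_Icc 0 1)
    · exact Continuous.continuousOn (by
        have : Continuous g := by
          have : Continuous fun t : ℝ => f (x + t • v) :=
            hf.continuous.comp (by continuity)
          rw [hg]
          exact (this.sub (continuous_id.mul continuous_const)).sub
            (continuous_const.mul (continuous_pow 2))
        exact this)
    · intro t ht
      exact (hderiv t).differentiableAt.differentiableWithinAt
    · intro t ht
      rw [interior_Icc] at ht
      rw [(hderiv t).deriv]
      have hle : ⟪gradient f (x + t • v) - gradient f x, v⟫ ≤ β * ‖v‖ ^ 2 * t := by
        calc ⟪gradient f (x + t • v) - gradient f x, v⟫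
            ≤ ‖gradient f (x + t • v) - gradient f x‖ * ‖v‖ := real_inner_le_norm _ _
          _ ≤ (β * ‖x + t • v - x‖) * ‖v‖ := by
              apply mul_le_mul_of_nonneg_right (hlip _ _) (norm_nonneg v)
          _ = β * ‖v‖ ^ 2 * t := by
              simp [add_sub_cancel_left, norm_smul, abs_of_nonneg ht.1.le]
              ring
      rw [inner_sub_left] at hle
      linarith
  have h01 := hanti (Set.left_mem_Icc.mpr zero_le_one) (Set.right_mem_Icc.mpr zero_le_one)
    zero_le_one
  simp only [hg] at h01
  simp at h01
  have hgv : ⟪gradient f x, v⟫ = fderiv ℝ f x v := by simp [gradient]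
  linarith [h01, hgv]

lemma SNGD_gradient_neg (f : F → ℝ) (x : F) : gradient (fun y => -f y) x = -gradient f x := by
  unfold gradient
  rw [show (fderiv ℝ (fun y => -f y) x) = -(fderiv ℝ f x) from fderiv_neg, map_neg]

lemma SNGD_descent_abs {β : ℝ} {f : F → ℝ} (hf : Differentiable ℝ f)
    (hlip : ∀ x y : F, ‖gradient f x - gradient f y‖ ≤ β * ‖x - y‖) (x v : F) :
    |f (x + v) - f x - ⟪gradient f x, v⟫| ≤ β / 2 * ‖v‖ ^ 2 := by
  have h1 := SNGD_descent_upper hf hlip x v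
  have h2 := SNGD_descent_upper (f := fun y => -f y) (hf.neg)
    (fun a b => by
      rw [SNGD_gradient_neg, SNGD_gradient_neg, neg_sub_neg, norm_sub_rev a b]
      exact hlip b a) x v
  rw [SNGD_gradient_neg] at h2
  simp only [inner_neg_left] at h2
  rw [abs_le]
  constructor <;> linarith

end Descent


/-- Lemma 1 (large gradients, noisy step): if `‖∇f(x₀)‖ ≥ β√η` and `η² + dθ² ≤ η^{3/2}`,
then the expected value after one noisy NGD step decreases by at least `βη^{3/2}/2`. -/
theorem stmt_2 (d : ℕ) (hd : 1 ≤ d) (β η θ : ℝ) (hβ : 0 < β)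
    (f : Euc d → ℝ) (hf : IsSmoothFn β f)
    (hη : 0 < η) (hθ : 0 < θ)
    (hcond : η ^ 2 + (d : ℝ) * θ ^ 2 ≤ η * Real.sqrt η)
    (x₀ : Euc d) (hg : β * Real.sqrt η ≤ ‖gradient f x₀‖) :
    (∫ n, f (x₀ - (η * ‖gradient f x₀‖⁻¹) • gradient f x₀ + θ • n) ∂(stdGaussian d))
        - f x₀ ≤ -(β * (η * Real.sqrt η)) / 2 := by
  obtain ⟨hdiff, hlip⟩ := hf
  set g₀ : Euc d := gradient f x₀ with hg₀
  have hsqrt : 0 < Real.sqrt η := Real.sqrt_pos.mpr hη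
  have hg₀pos : 0 < ‖g₀‖ := lt_of_lt_of_le (mul_pos hβ hsqrt) hg
  have hg₀ne : ‖g₀‖ ≠ 0 := ne_of_gt hg₀pos
  set u : Euc d := (η * ‖g₀‖⁻¹) • g₀ with hu
  have hinner_gu : ⟪g₀, u⟫ = η * ‖g₀‖ := by
    rw [hu, real_inner_smul_right, real_inner_self_eq_norm_sq]
    field_simp
  have hu_norm : ‖u‖ = η := by
    rw [hu, norm_smul, Real.norm_eq_abs,
      abs_of_nonneg (by positivity : (0:ℝ) ≤ η * ‖g₀‖⁻¹)]
    field_simp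
  -- the remainder function
  set r : Euc d → ℝ := fun w => f (x₀ + w) - f x₀ - ⟪g₀, w⟫ with hr
  have hr_up : ∀ w : Euc d, r w ≤ β / 2 * ‖w‖ ^ 2 := by
    intro w
    have := SNGD_descent_upper hdiff hlip x₀ w
    simp only [hr]
    rw [← hg₀] at this
    linarith
  have hr_abs : ∀ w : Euc d, |r w| ≤ β / 2 * ‖w‖ ^ 2 := by
    intro w
    have := SNGD_descent_abs hdiff hlip x₀ w
    simp only [hr]
    rw [← hg₀] at this
    exact this
  -- the displacement
  set Φ : Euc d → Euc d := fun n => θ • n - u with hΦ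
  have harg : ∀ n : Euc d, x₀ - u + θ • n = x₀ + Φ n := by
    intro n; simp only [hΦ]; abel
  have hΦsq : ∀ n : Euc d, ‖Φ n‖ ^ 2
      = θ ^ 2 * ‖n‖ ^ 2 - 2 * θ * ⟪u, n⟫ + ‖u‖ ^ 2 := by
    intro n
    simp only [hΦ]
    rw [norm_sub_sq_real, norm_smul, real_inner_smul_left]
    rw [Real.norm_eq_abs, abs_of_nonneg hθ.le]
    rw [real_inner_comm n u]
    ring
  -- integrability
  have hA : Integrable (fun n : Euc d => θ ^ 2 * ‖n‖ ^ 2 - 2 * θ * ⟪u, n⟫) (stdGaussian d) :=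
    ((SNGD_std_normsq_integrable (d := d)).const_mul (θ ^ 2)).sub
      ((SNGD_std_inner_integrable u).const_mul (2 * θ))
  have hQint : Integrable (fun n : Euc d => ‖Φ n‖ ^ 2) (stdGaussian d) := by
    have h2 : Integrable
        (fun n : Euc d => (θ ^ 2 * ‖n‖ ^ 2 - 2 * θ * ⟪u, n⟫) + ‖u‖ ^ 2) (stdGaussian d) :=
      hA.add (integrable_const (μ := stdGaussian d) (‖u‖ ^ 2))
    refine h2.congr (Filter.Eventually.of_forall fun n => ?_)
    exact (hΦsq n).symm
  have hQval : ∫ n, ‖Φ n‖ ^ 2 ∂(stdGaussian d) = θ ^ 2 * (d : ℝ) + ‖u‖ ^ 2 := by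
    have h : (fun n : Euc d => ‖Φ n‖ ^ 2)
        = fun n => (θ ^ 2 * ‖n‖ ^ 2 - 2 * θ * ⟪u, n⟫) + ‖u‖ ^ 2 := by
      funext n; rw [hΦsq n]
    rw [h]
    rw [integral_add hA (integrable_const _)]
    rw [integral_sub ((SNGD_std_normsq_integrable (d := d)).const_mul (θ ^ 2))
      ((SNGD_std_inner_integrable u).const_mul (2 * θ))]
    rw [integral_const_mul, integral_const_mul, SNGD_std_normsq_integral,
      SNGD_std_inner_integral, integral_const]
    simp
  have hrcont : Continuous r := by
    have h1 : Continuous fun w : Euc d => f (x₀ + w) :=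
      hdiff.continuous.comp (continuous_const.add continuous_id)
    have h2 : Continuous fun w : Euc d => ⟪g₀, w⟫ := continuous_const.inner continuous_id
    exact (h1.sub continuous_const).sub h2
  have hΦcont : Continuous Φ := by
    simp only [hΦ]
    fun_prop
  have hrint : Integrable (fun n : Euc d => r (Φ n)) (stdGaussian d) := by
    refine Integrable.mono' (hQint.const_mul (β / 2))
      ((hrcont.comp hΦcont).aestronglyMeasurable)
      (Filter.Eventually.of_forall fun n => ?_)
    rw [Real.norm_eq_abs]
    exact hr_abs (Φ n)
  -- decompose the integrand
  have hdecomp : (fun n : Euc d => f (x₀ - u + θ • n))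
      = fun n => (f x₀ - ⟪g₀, u⟫) + (θ * ⟪g₀, n⟫ + r (Φ n)) := by
    funext n
    rw [harg n]
    simp only [hr, hΦ]
    simp only [inner_sub_right, real_inner_smul_right]
    ring
  have hint2 : Integrable (fun n : Euc d => θ * ⟪g₀, n⟫ + r (Φ n)) (stdGaussian d) :=
    ((SNGD_std_inner_integrable g₀).const_mul θ).add hrint
  have hIval : ∫ n, f (x₀ - u + θ • n) ∂(stdGaussian d)
      = (f x₀ - ⟪g₀, u⟫) + ∫ n, r (Φ n) ∂(stdGaussian d) := by
    rw [hdecomp, integral_add (integrable_const _) hint2,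
      integral_add ((SNGD_std_inner_integrable g₀).const_mul θ) hrint,
      integral_const_mul, SNGD_std_inner_integral, integral_const]
    simp
  have hrbound : ∫ n, r (Φ n) ∂(stdGaussian d) ≤ β / 2 * (θ ^ 2 * (d : ℝ) + ‖u‖ ^ 2) := by
    calc ∫ n, r (Φ n) ∂(stdGaussian d)
        ≤ ∫ n, β / 2 * ‖Φ n‖ ^ 2 ∂(stdGaussian d) :=
          integral_mono hrint (hQint.const_mul (β / 2)) (fun n => hr_up (Φ n))
      _ = β / 2 * (θ ^ 2 * (d : ℝ) + ‖u‖ ^ 2) := by rw [integral_const_mul, hQval]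
  rw [hu_norm] at hrbound
  rw [hIval, hinner_gu]
  have t1 : η * (β * Real.sqrt η) ≤ η * ‖g₀‖ := mul_le_mul_of_nonneg_left hg hη.le
  have t2 : β / 2 * (η ^ 2 + (d : ℝ) * θ ^ 2) ≤ β / 2 * (η * Real.sqrt η) :=
    mul_le_mul_of_nonneg_left hcond (by positivity)
  have hrb2 : ∫ n, r (Φ n) ∂(stdGaussian d) ≤ β / 2 * (η ^ 2 + (d : ℝ) * θ ^ 2) := by
    calc ∫ n, r (Φ n) ∂(stdGaussian d) ≤ β / 2 * (θ ^ 2 * (d : ℝ) + η ^ 2) := hrbound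
      _ = β / 2 * (η ^ 2 + (d : ℝ) * θ ^ 2) := by ring
  nlinarith [hrb2, t1, t2]
end
end

section
/- Let 0 < α ≤ β, r > 0, and 0 < η with (β/α)·√η ≤ r and √2·(β/α)·η ≤ r. Let f : ℝ^d → ℝ be β-smooth and α-strongly convex on the closed ball of radius 2r around a point x* with ∇f(x*) = 0. Let (x_t)_{t≥0} be the noiseless normalized gradient descent iterates started from x₀ with ‖x₀ − x*‖ ≤ (β/α)·√η. Then for every t ≥ 0: ‖x_t − x*‖² ≤ max{‖x₀ − x*‖², 2β²η²/α²}. -/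
open MeasureTheory ProbabilityTheory
open scoped RealInnerProductSpace

noncomputable section

set_option maxHeartbeats 1000000 in
/-- Lemma 5 (local minimum, noiseless): NGD started `(β/α)√η`-close to a local minimum
`x*` of a locally strongly convex function stays within
`max{‖x₀ − x*‖², 2β²η²/α²}` squared distance of `x*`. -/
theorem stmt_4 (d : ℕ) (α β r η : ℝ)
    (hα : 0 < α) (hαβ : α ≤ β) (hr : 0 < r) (hη : 0 < η)
    (hηr : β / α * Real.sqrt η ≤ r) (hηr' : Real.sqrt 2 * (β / α) * η ≤ r)
    (f : Euc d → ℝ) (xs : Euc d)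
    (hf : IsSmoothFn β f)
    (hsc : StrongConvexOnSet α (Metric.closedBall xs (2 * r)) f)
    (hgs : gradient f xs = 0)
    (x : ℕ → Euc d)
    (hx0 : ‖x 0 - xs‖ ≤ β / α * Real.sqrt η)
    (hrec : ∀ t : ℕ, x (t + 1) =
      x t - (η * ‖gradient f (x t)‖⁻¹) • gradient f (x t)) :
    ∀ t : ℕ, ‖x t - xs‖ ^ 2 ≤ max (‖x 0 - xs‖ ^ 2) (2 * β ^ 2 * η ^ 2 / α ^ 2) := by
  
  have hβ : 0 < β := lt_of_lt_of_le hα hαβ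
  set D := max (‖x 0 - xs‖ ^ 2) (2 * β ^ 2 * η ^ 2 / α ^ 2) with hDdef
  -- D ≤ r^2
  have hD_r : D ≤ r ^ 2 := by
    apply max_le
    · have h1 : ‖x 0 - xs‖ ≤ r := hx0.trans hηr
      nlinarith [norm_nonneg (x 0 - xs)]
    · have hnn : 0 ≤ Real.sqrt 2 * (β / α) * η := by positivity
      have h2 := mul_le_mul hηr' hηr' hnn (le_of_lt hr)
      have h3 : Real.sqrt 2 * Real.sqrt 2 = 2 := Real.mul_self_sqrt (by norm_num)
      have heq : (Real.sqrt 2 * (β / α) * η) * (Real.sqrt 2 * (β / α) * η)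
          = 2 * β ^ 2 * η ^ 2 / α ^ 2 := by
        calc (Real.sqrt 2 * (β / α) * η) * (Real.sqrt 2 * (β / α) * η)
            = (Real.sqrt 2 * Real.sqrt 2) * ((β * η / α) * (β * η / α)) := by ring
          _ = 2 * β ^ 2 * η ^ 2 / α ^ 2 := by rw [h3]; field_simp
      rw [heq] at h2
      nlinarith [h2]
  intro t
  induction t with
  | zero => exact le_max_left _ _
  | succ t ih =>
    set st := ‖x t - xs‖ with hst
    have hst0 : 0 ≤ st := norm_nonneg _
    have hstr : st ≤ r := by nlinarith [hD_r, ih]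
    have hmem : x t ∈ Metric.closedBall xs (2 * r) := by
      rw [Metric.mem_closedBall, dist_eq_norm]
      linarith
    have hmemxs : xs ∈ Metric.closedBall xs (2 * r) := by
      rw [Metric.mem_closedBall, dist_self]; positivity
    set g := gradient f (x t) with hg
    by_cases hgz : g = 0
    · rw [hrec t, ← hg, hgz]
      simpa using ih
    · have hG : 0 < ‖g‖ := norm_pos_iff.mpr hgz
      -- strong convexity inner bound
      have hA := hsc (x t) hmem xs hmemxs
      have hB := hsc xs hmemxs (x t) hmem
      rw [hgs] at hB
      simp only [inner_zero_left] at hB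
      have hnormsym : ‖xs - x t‖ = st := by rw [hst, norm_sub_rev]
      rw [hnormsym] at hB
      have hinner_sub : ⟪g, xs - x t⟫ = - ⟪g, x t - xs⟫ := by
        rw [← inner_neg_right, neg_sub]
      rw [hinner_sub] at hA
      have hkey : α * st ^ 2 ≤ ⟪g, x t - xs⟫ := by
        have := add_le_add hA.le hB.le  -- careful orientation
        nlinarith [hA, hB]
      -- gradient norm bound
      have hg_le : ‖g‖ ≤ β * st := by
        have := hf.2 (x t) xs
        rwa [hgs, sub_zero] at this
      have hstpos : 0 < st := by
        rcases lt_or_eq_of_le hst0 with h | h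
        · exact h
        · exfalso; rw [← h] at hg_le; simp at hg_le; exact hgz hg_le
      -- expand the square
      have hexp : ‖x (t+1) - xs‖ ^ 2
          = st ^ 2 - 2 * (η * ‖g‖⁻¹) * ⟪g, x t - xs⟫ + η ^ 2 := by
        have h1 : x (t+1) - xs = (x t - xs) - (η * ‖g‖⁻¹) • g := by
          rw [hrec t, ← hg, sub_right_comm]
        rw [h1, norm_sub_sq_real, real_inner_smul_right, real_inner_comm]
        have h2 : ‖(η * ‖g‖⁻¹) • g‖ ^ 2 = η ^ 2 := by
          rw [norm_smul, Real.norm_eq_abs, abs_of_nonneg (by positivity)]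
          field_simp
        rw [h2, ← hst]; ring
      have hInn0 : 0 ≤ ⟪g, x t - xs⟫ := le_trans (by positivity) hkey
      have hGinv : 0 < ‖g‖⁻¹ := inv_pos.mpr hG
      rcases le_or_gt (β * η) (α * st) with hcase | hcase
      · -- large distance: decreases
        have hIG : η * ‖g‖ ≤ ⟪g, x t - xs⟫ := by nlinarith
        have hstep : η ^ 2 ≤ (η * ‖g‖⁻¹) * ⟪g, x t - xs⟫ := by
          have := mul_le_mul_of_nonneg_right hIG (le_of_lt hGinv)
          have hGG : ‖g‖ * ‖g‖⁻¹ = 1 := mul_inv_cancel₀ (ne_of_gt hG)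
          nlinarith
        calc ‖x (t+1) - xs‖ ^ 2 = st ^ 2 - 2 * (η * ‖g‖⁻¹) * ⟪g, x t - xs⟫ + η ^ 2 := hexp
          _ ≤ st ^ 2 := by nlinarith
          _ ≤ D := ih
      · -- small distance: bounded by 2β²η²/α²
        have hbd : ‖x (t+1) - xs‖ ^ 2 ≤ st ^ 2 + η ^ 2 := by
          rw [hexp]
          nlinarith [mul_nonneg (mul_nonneg (le_of_lt hη) (le_of_lt hGinv)) hInn0]
        have hfin : st ^ 2 + η ^ 2 ≤ 2 * β ^ 2 * η ^ 2 / α ^ 2 := by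
          rw [le_div_iff₀ (by positivity : (0:ℝ) < α ^ 2)]
          nlinarith [mul_le_mul hcase.le hcase.le (mul_nonneg hα.le hst0) (mul_nonneg hβ.le hη.le),
            mul_le_mul hαβ hαβ hα.le hβ.le, sq_nonneg η]
        exact le_trans (hbd.trans hfin) (le_max_right _ _)
end
end

section
/- Let 0 < α ≤ β, r > 0, and 0 < η ≤ 1. Let f : ℝ^d → ℝ be β-smooth and α-strongly convex on the closed ball of radius 2r around a point x* with ∇f(x*) = 0. Let x ∈ ℝ^d satisfy (β/α)·√η ≤ ‖x − x*‖ ≤ 2r. Then ∇f(x) ≠ 0, and the normalized gradient descent step x' = x − η·∇f(x)/‖∇f(x)‖ satisfies ‖x' − x*‖² ≤ ‖x − x*‖² − η^{3/2}. -/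
open MeasureTheory ProbabilityTheory
open scoped RealInnerProductSpace

noncomputable section

/-- One NGD step towards a local minimum: if `(β/α)√η ≤ ‖x − x*‖ ≤ 2r`, the gradient is
nonzero and the normalized step decreases the squared distance by at least `η^{3/2}`. -/
theorem stmt_6 (d : ℕ) (α β r η : ℝ)
    (hα : 0 < α) (hαβ : α ≤ β) (hr : 0 < r) (hη0 : 0 < η) (hη1 : η ≤ 1)
    (f : Euc d → ℝ) (xs : Euc d)
    (hf : IsSmoothFn β f)
    (hsc : StrongConvexOnSet α (Metric.closedBall xs (2 * r)) f)
    (hgs : gradient f xs = 0)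
    (x : Euc d)
    (hlow : β / α * Real.sqrt η ≤ ‖x - xs‖) (hhigh : ‖x - xs‖ ≤ 2 * r) :
    gradient f x ≠ 0 ∧
      ‖x - (η * ‖gradient f x‖⁻¹) • gradient f x - xs‖ ^ 2 ≤
        ‖x - xs‖ ^ 2 - η * Real.sqrt η := by
  obtain ⟨hdiff, hlip⟩ := hf
  have hβ : 0 < β := lt_of_lt_of_le hα hαβ
  have hsq : 0 < Real.sqrt η := Real.sqrt_pos.2 hη0
  have hR0 : 0 < ‖x - xs‖ := lt_of_lt_of_le (by positivity) hlow
  have hxmem : x ∈ Metric.closedBall xs (2 * r) := by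
    simpa [Metric.mem_closedBall, dist_eq_norm] using hhigh
  have hxsmem : xs ∈ Metric.closedBall xs (2 * r) :=
    Metric.mem_closedBall_self (by positivity)
  have h1 := hsc x hxmem xs hxsmem
  have h2 := hsc xs hxsmem x hxmem
  rw [hgs] at h2
  simp only [inner_zero_left, zero_add] at h2
  have hneg : ⟪gradient f x, xs - x⟫ = -⟪gradient f x, x - xs⟫ := by
    rw [← inner_neg_right, neg_sub]
  have hrev : ‖xs - x‖ = ‖x - xs‖ := norm_sub_rev _ _
  have hkey : α * ‖x - xs‖ ^ 2 ≤ ⟪gradient f x, x - xs⟫ := by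
    rw [hneg] at h1; rw [hrev] at h2; linarith
  have hgnorm : ‖gradient f x‖ ≤ β * ‖x - xs‖ := by
    simpa [hgs] using hlip x xs
  have hcs : ⟪gradient f x, x - xs⟫ ≤ ‖gradient f x‖ * ‖x - xs‖ :=
    real_inner_le_norm _ _
  have hgne : gradient f x ≠ 0 := by
    intro h
    rw [h] at hkey
    simp only [inner_zero_left] at hkey
    exact absurd hkey (not_le.2 (mul_pos hα (pow_pos hR0 2)))
  have hgpos : 0 < ‖gradient f x‖ := norm_pos_iff.2 hgne
  refine ⟨hgne, ?_⟩
  have hαR : Real.sqrt η * β ≤ α * ‖x - xs‖ := by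
    have h' := mul_le_mul_of_nonneg_left hlow hα.le
    have heq : α * (β / α * Real.sqrt η) = Real.sqrt η * β := by
      field_simp
    linarith
  have hIge : Real.sqrt η * ‖gradient f x‖ ≤ ⟪gradient f x, x - xs⟫ := by
    nlinarith [mul_le_mul_of_nonneg_left hgnorm hsq.le,
      mul_le_mul_of_nonneg_right hαR hR0.le]
  have hfrac : Real.sqrt η ≤ ‖gradient f x‖⁻¹ * ⟪gradient f x, x - xs⟫ := by
    rw [inv_mul_eq_div, le_div_iff₀ hgpos]
    linarith [hIge]
  have hnorm_smul : ‖(η * ‖gradient f x‖⁻¹) • gradient f x‖ = η := by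
    rw [norm_smul, Real.norm_eq_abs, abs_of_pos (by positivity), mul_assoc,
      inv_mul_cancel₀ hgpos.ne', mul_one]
  have harr : x - (η * ‖gradient f x‖⁻¹) • gradient f x - xs
      = (x - xs) - (η * ‖gradient f x‖⁻¹) • gradient f x := by abel
  have hexp : ‖x - (η * ‖gradient f x‖⁻¹) • gradient f x - xs‖ ^ 2
      = ‖x - xs‖ ^ 2
        - 2 * ((η * ‖gradient f x‖⁻¹) * ⟪gradient f x, x - xs⟫) + η ^ 2 := by
    rw [harr, @norm_sub_sq_real, hnorm_smul, real_inner_smul_right,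
      real_inner_comm]
  have hη_le : η ≤ Real.sqrt η := by
    nlinarith [Real.sq_sqrt hη0.le, Real.sqrt_nonneg η]
  rw [hexp]
  have h2t : 2 * (η * Real.sqrt η) ≤
      2 * ((η * ‖gradient f x‖⁻¹) * ⟪gradient f x, x - xs⟫) := by
    have h3 := mul_le_mul_of_nonneg_left hfrac hη0.le
    have heq : (η * ‖gradient f x‖⁻¹) * ⟪gradient f x, x - xs⟫
        = η * (‖gradient f x‖⁻¹ * ⟪gradient f x, x - xs⟫) :=
      mul_assoc _ _ _
    linarith
  have hη2 : η ^ 2 ≤ η * Real.sqrt η := by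
    rw [sq]; exact mul_le_mul_of_nonneg_left hη_le hη0.le
  linarith
end
end

section
/- Consider the normalized-update dynamics with approximation error (ρ/2)·η²·T², and let e be a unit eigenvector of H with eigenvalue λ ≥ 0; write α_t = ⟨e, x_t⟩. Then for every t with 0 ≤ t ≤ T: (i) if λ·|α₀| ≥ (ρ/2)·η²·T², then |α_t| ≤ max{η, |α₀|} + η; (ii) if λ > 0, then in any case |α_t| ≤ max{η, |α₀|} + η·min{1 + ρηT²/(2λ), T}. -/
open MeasureTheory ProbabilityTheory
open scoped RealInnerProductSpace

noncomputable section

set_option maxHeartbeats 1000000 in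
/-- Lemma 7 (positive eigendirections): in the normalized-update dynamics with
approximation error `(ρ/2)η²T²`, the component `α_t = ⟨e, x_t⟩` along a unit eigenvector
`e` of `H` with eigenvalue `λ ≥ 0` stays bounded as stated. -/
theorem stmt_12 (d : ℕ) (H : Euc d →L[ℝ] Euc d)
    (hsym : ∀ v w : Euc d, ⟪H v, w⟫ = ⟪v, H w⟫)
    (η ρ : ℝ) (hη : 0 < η) (hρ : 0 < ρ) (T : ℕ)
    (x g : ℕ → Euc d)
    (hgne : ∀ t ≤ T, g t ≠ 0)
    (hrec : ∀ t < T, x (t + 1) = x t - (η * ‖g t‖⁻¹) • g t)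
    (happ : ∀ t ≤ T, ‖g t - H (x t)‖ ≤ ρ / 2 * η ^ 2 * (T : ℝ) ^ 2)
    (e : Euc d) (he : ‖e‖ = 1) (lam : ℝ) (heig : H e = lam • e) (hlam : 0 ≤ lam) :
    ∀ t ≤ T,
      (ρ / 2 * η ^ 2 * (T : ℝ) ^ 2 ≤ lam * |⟪e, x 0⟫| →
        |⟪e, x t⟫| ≤ max η |⟪e, x 0⟫| + η) ∧
      (0 < lam →
        |⟪e, x t⟫| ≤ max η |⟪e, x 0⟫|
          + η * min (1 + ρ * η * (T : ℝ) ^ 2 / (2 * lam)) (T : ℝ)) := by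
  
  set ε := ρ / 2 * η ^ 2 * (T : ℝ) ^ 2 with hεdef
  have hεnn : 0 ≤ ε := by positivity
  set α : ℕ → ℝ := fun t => ⟪e, x t⟫ with hαdef
  have h1 : ∀ s, s ≤ T → |⟪e, g s⟫ - lam * α s| ≤ ε := by
    intro s hs
    have heq : ⟪e, g s⟫ - lam * α s = ⟪e, g s - H (x s)⟫ := by
      rw [inner_sub_right]
      have h2 : ⟪e, H (x s)⟫ = lam * α s := by
        rw [← hsym, heig, real_inner_smul_left]
      rw [h2]
    rw [heq]
    calc |⟪e, g s - H (x s)⟫| ≤ ‖e‖ * ‖g s - H (x s)‖ := abs_real_inner_le_norm _ _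
      _ ≤ ε := by rw [he, one_mul]; exact happ s hs
  have h2 : ∀ s, s < T → α (s + 1) = α s - (η * ‖g s‖⁻¹) * ⟪e, g s⟫ := by
    intro s hs
    simp only [hαdef, hrec s hs, inner_sub_right, real_inner_smul_right]
  have hg : ∀ s, s ≤ T → |(η * ‖g s‖⁻¹) * ⟪e, g s⟫| ≤ η := by
    intro s hs
    have hgn : 0 < ‖g s‖ := norm_pos_iff.mpr (hgne s hs)
    have hcs : |⟪e, g s⟫| ≤ ‖g s‖ := by
      have := abs_real_inner_le_norm e (g s)
      rwa [he, one_mul] at this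
    rw [abs_mul, abs_of_nonneg (by positivity : (0:ℝ) ≤ η * ‖g s‖⁻¹)]
    calc η * ‖g s‖⁻¹ * |⟪e, g s⟫| ≤ η * ‖g s‖⁻¹ * ‖g s‖ := by
          exact mul_le_mul_of_nonneg_left hcs (by positivity)
      _ = η := by field_simp
  have h3 : ∀ s, s < T → |α (s + 1) - α s| ≤ η := by
    intro s hs
    rw [h2 s hs]
    simpa using hg s hs.le
  have h4 : ∀ s, s < T → ε ≤ lam * |α s| → |α (s + 1)| ≤ max (|α s|) η := by
    intro s hs hle
    have hgn : 0 < ‖g s‖ := norm_pos_iff.mpr (hgne s hs.le)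
    have hcnn : (0:ℝ) ≤ η * ‖g s‖⁻¹ := by positivity
    have hδ := abs_le.mp (h1 s hs.le)
    have hbound := abs_le.mp (hg s hs.le)
    rw [h2 s hs]
    rcases le_or_gt 0 (α s) with hpos | hneg
    · have habs : |α s| = α s := abs_of_nonneg hpos
      rw [habs] at hle
      have hsame : 0 ≤ ⟪e, g s⟫ := by linarith [hδ.1]
      have hs0 : 0 ≤ (η * ‖g s‖⁻¹) * ⟪e, g s⟫ := mul_nonneg hcnn hsame
      rw [abs_le]
      constructor
      · have hmax : η ≤ max (|α s|) η := le_max_right _ _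
        nlinarith [hbound.2]
      · have : α s ≤ max (|α s|) η := le_trans (le_abs_self _) (le_max_left _ _)
        linarith
    · have habs : |α s| = -α s := abs_of_neg hneg
      rw [habs] at hle
      have hsame : ⟪e, g s⟫ ≤ 0 := by linarith [hδ.2]
      have hs0 : (η * ‖g s‖⁻¹) * ⟪e, g s⟫ ≤ 0 := mul_nonpos_of_nonneg_of_nonpos hcnn hsame
      rw [abs_le]
      constructor
      · have h5 : α s ≤ α s - (η * ‖g s‖⁻¹) * ⟪e, g s⟫ := by linarith
        have h6 : |α s| ≤ max (|α s|) η := le_max_left _ _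
        linarith
      · have h5 : α s - (η * ‖g s‖⁻¹) * ⟪e, g s⟫ ≤ η := by linarith [hbound.1]
        linarith [le_max_right (|α s|) η]
  have B0 : ∀ s, s ≤ T → |α s| ≤ |α 0| + η * s := by
    intro s
    induction s with
    | zero => intro _; simp
    | succ n ih =>
      intro hn
      have hnT : n < T := hn
      have := h3 n hnT
      have habs := abs_sub_abs_le_abs_sub (α (n + 1)) (α n)
      have := ih hnT.le
      push_cast
      nlinarith
  have B1 : ε ≤ lam * |α 0| → ∀ s, s ≤ T → |α s| ≤ max η (|α 0|) + η := by
    intro hcond s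
    induction s with
    | zero =>
      intro _
      have := le_max_right η (|α 0|)
      linarith
    | succ n ih =>
      intro hn
      have hnT : n < T := hn
      have ihn := ih hnT.le
      rcases le_or_gt (|α n|) (max η (|α 0|)) with hle | hgt
      · have habs := abs_sub_abs_le_abs_sub (α (n + 1)) (α n)
        have := h3 n hnT
        linarith
      · have hεa : ε ≤ lam * |α n| := by
          have h0n : |α 0| ≤ |α n| := le_trans (le_max_right η _) hgt.le
          nlinarith
        have hstep := h4 n hnT hεa
        have hm : max (|α n|) η ≤ max η (|α 0|) + η := by
          refine max_le ihn ?_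
          have := le_max_left η (|α 0|)
          linarith
        linarith
  have B2 : 0 < lam → ∀ s, s ≤ T →
      |α s| ≤ max (max η (|α 0|)) (ε / lam) + η := by
    intro hl s
    induction s with
    | zero =>
      intro _
      have h1' : |α 0| ≤ max η (|α 0|) := le_max_right _ _
      have h2' : max η (|α 0|) ≤ max (max η (|α 0|)) (ε / lam) := le_max_left _ _
      linarith
    | succ n ih =>
      intro hn
      have hnT : n < T := hn
      have ihn := ih hnT.le
      set K := max (max η (|α 0|)) (ε / lam) with hK
      rcases le_or_gt (|α n|) K with hle | hgt
      · have habs := abs_sub_abs_le_abs_sub (α (n + 1)) (α n)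
        have := h3 n hnT
        linarith
      · have hεa : ε ≤ lam * |α n| := by
          have : ε / lam ≤ |α n| := le_trans (le_max_right _ _) hgt.le
          rw [div_le_iff₀ hl] at this
          linarith
        have hstep := h4 n hnT hεa
        have hm : max (|α n|) η ≤ K + η := by
          refine max_le ihn ?_
          have : η ≤ max η (|α 0|) := le_max_left _ _
          have : max η (|α 0|) ≤ K := le_max_left _ _
          nlinarith [le_max_left η (|α 0|), le_max_left (max η (|α 0|)) (ε / lam)]
        linarith
  intro t htT
  constructor
  · intro hcond
    exact B1 hcond t htT
  · intro hl
    rcases min_cases (1 + ρ * η * (T : ℝ) ^ 2 / (2 * lam)) ((T : ℝ)) with ⟨hmin, _⟩ | ⟨hmin, _⟩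
    · rw [hmin]
      have hB2 := B2 hl t htT
      have hεl : η * (1 + ρ * η * (T : ℝ) ^ 2 / (2 * lam)) = η + ε / lam := by
        rw [hεdef]
        field_simp
      rw [hεl]
      have hεlnn : 0 ≤ ε / lam := div_nonneg hεnn hl.le
      have hMnn : 0 ≤ max η (|α 0|) := le_trans hη.le (le_max_left _ _)
      have hmax : max (max η (|α 0|)) (ε / lam) ≤ max η (|α 0|) + ε / lam := by
        refine max_le (by linarith) (by linarith)
      linarith
    · rw [hmin]
      have hB0 := B0 t htT
      have htT' : (t : ℝ) ≤ (T : ℝ) := Nat.cast_le.mpr htT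
      have : |α 0| ≤ max η (|α 0|) := le_max_right _ _
      nlinarith
end
end

section
/- Consider the normalized-update dynamics with approximation error (ρ/2)·η²·T², and let e be a unit eigenvector of H with eigenvalue λ ≤ 0; write α_t = ⟨e, x_t⟩. Then for every t with 0 ≤ t ≤ T: |α_t| ≥ |α₀| − η·t, and if moreover |λ|·|α₀| > (ρ/2)·η²·T², then |α_t| ≥ |α₀|. -/
open MeasureTheory ProbabilityTheory
open scoped RealInnerProductSpace

noncomputable section

/-- Lemma 8 (negative eigendirections): in the normalized-update dynamics with
approximation error `(ρ/2)η²T²`, the component `α_t = ⟨e, x_t⟩` along a unit eigenvector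
`e` of `H` with eigenvalue `λ ≤ 0` cannot shrink too much. -/
theorem stmt_13 (d : ℕ) (H : Euc d →L[ℝ] Euc d)
    (hsym : ∀ v w : Euc d, ⟪H v, w⟫ = ⟪v, H w⟫)
    (η ρ : ℝ) (hη : 0 < η) (hρ : 0 < ρ) (T : ℕ)
    (x g : ℕ → Euc d)
    (hgne : ∀ t ≤ T, g t ≠ 0)
    (hrec : ∀ t < T, x (t + 1) = x t - (η * ‖g t‖⁻¹) • g t)
    (happ : ∀ t ≤ T, ‖g t - H (x t)‖ ≤ ρ / 2 * η ^ 2 * (T : ℝ) ^ 2)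
    (e : Euc d) (he : ‖e‖ = 1) (lam : ℝ) (heig : H e = lam • e) (hlam : lam ≤ 0) :
    ∀ t ≤ T,
      |⟪e, x 0⟫| - η * t ≤ |⟪e, x t⟫| ∧
      (ρ / 2 * η ^ 2 * (T : ℝ) ^ 2 < |lam| * |⟪e, x 0⟫| →
        |⟪e, x 0⟫| ≤ |⟪e, x t⟫|) := by
  have habs_add : ∀ a c : ℝ, 0 ≤ a * c → |a| ≤ |a + c| := by
    intro a c h
    have h2 : a ^ 2 ≤ (a + c) ^ 2 := by nlinarith [sq_nonneg c]
    calc |a| = Real.sqrt (a ^ 2) := (Real.sqrt_sq_eq_abs a).symm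
      _ ≤ Real.sqrt ((a + c) ^ 2) := Real.sqrt_le_sqrt h2
      _ = |a + c| := Real.sqrt_sq_eq_abs _
  set ε := ρ / 2 * η ^ 2 * (T : ℝ) ^ 2 with hε
  intro t
  induction t with
  | zero =>
    intro _
    constructor
    · simp
    · intro _; exact le_rfl
  | succ n ih =>
    intro hn1
    have hnT : n ≤ T := Nat.le_of_succ_le hn1
    have hnlt : n < T := hn1
    obtain ⟨ih1, ih2⟩ := ih hnT
    have hg0 : (0 : ℝ) < ‖g n‖ := norm_pos_iff.mpr (hgne n hnT)
    -- the recursion on α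
    have hx : ⟪e, x (n + 1)⟫ = ⟪e, x n⟫ + (-(η * ‖g n‖⁻¹)) * ⟪e, g n⟫ := by
      rw [hrec n hnlt, inner_sub_right, real_inner_smul_right]; ring
    set a := ⟪e, x n⟫ with ha
    set b := ⟪e, g n⟫ with hb
    -- Cauchy–Schwarz bound
    have hCS : |b| ≤ ‖g n‖ := by
      calc |b| ≤ ‖e‖ * ‖g n‖ := abs_real_inner_le_norm e (g n)
        _ = ‖g n‖ := by rw [he, one_mul]
    -- error bound
    have hdel : |b - lam * a| ≤ ε := by
      have h1 : ⟪e, g n - H (x n)⟫ = b - lam * a := by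
        rw [inner_sub_right, ← hsym, heig, real_inner_smul_left]
      calc |b - lam * a| = |⟪e, g n - H (x n)⟫| := by rw [h1]
        _ ≤ ‖e‖ * ‖g n - H (x n)‖ := abs_real_inner_le_norm _ _
        _ ≤ ε := by rw [he, one_mul]; exact happ n hnT
    constructor
    · -- part 1
      have hstep : |a| - η ≤ |⟪e, x (n + 1)⟫| := by
        rw [hx]
        have h2 : |(-(η * ‖g n‖⁻¹)) * b| ≤ η := by
          rw [abs_mul, abs_neg, abs_of_nonneg (by positivity : (0:ℝ) ≤ η * ‖g n‖⁻¹)]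
          calc η * ‖g n‖⁻¹ * |b| ≤ η * ‖g n‖⁻¹ * ‖g n‖ :=
                by apply mul_le_mul_of_nonneg_left hCS; positivity
            _ = η := by field_simp
        have h3 := abs_add_le (a + (-(η * ‖g n‖⁻¹)) * b) (-((-(η * ‖g n‖⁻¹)) * b))
        simp only [add_neg_cancel_right] at h3
        rw [abs_neg] at h3
        linarith
      push_cast
      linarith
    · -- part 2
      intro hcond
      have hge := ih2 hcond
      have hlamneg : |lam| = -lam := abs_of_nonpos hlam
      have hε0 : 0 ≤ ε := by positivity
      -- a * b ≤ 0
      have hab : a * b ≤ 0 := by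
        have hd1 : b ≤ lam * a + ε := by have := abs_le.mp hdel; linarith [this.2]
        have hd2 : lam * a - ε ≤ b := by have := abs_le.mp hdel; linarith [this.1]
        rcases le_or_gt 0 a with hpos | hneg
        · have haa : |a| = a := abs_of_nonneg hpos
          have : b ≤ 0 := by nlinarith [abs_nonneg (⟪e, x 0⟫)]
          exact mul_nonpos_of_nonneg_of_nonpos hpos this
        · have haa : |a| = -a := abs_of_neg hneg
          have : 0 ≤ b := by nlinarith [abs_nonneg (⟪e, x 0⟫)]
          exact mul_nonpos_of_nonpos_of_nonneg hneg.le this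
      have hac : 0 ≤ a * ((-(η * ‖g n‖⁻¹)) * b) := by
        have hco : 0 ≤ η * ‖g n‖⁻¹ := by positivity
        nlinarith
      calc |⟪e, x 0⟫| ≤ |a| := hge
        _ ≤ |⟪e, x (n + 1)⟫| := by rw [hx]; exact habs_add _ _ hac
end
end

section
/- For every β > 0 and ρ > 0 there exists a constant C > 0, depending only on β and ρ, such that the following holds. Consider the normalized-update dynamics with approximation error (ρ/2)·η²·T², where 0 < η ≤ 1, 2 ≤ T ≤ η^{-1/2}, and all eigenvalues of H lie in [−β, β]. Let e be a unit eigenvector of H with eigenvalue λ > 0, write α_t = ⟨e, x_t⟩, and assume the initial-gradient bound λ·|α₀| ≤ β·√η. Then for every t with 0 ≤ t ≤ T: λ·((α_t)² − (α₀)²) ≤ C·η^{3/2}. -/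
open MeasureTheory ProbabilityTheory
open scoped RealInnerProductSpace

noncomputable section

/-- Scalar inequality for the large-eigenvalue case. -/
lemma aux_large (ρ β lam η S : ℝ) (hρ : 0 < ρ) (hβ : 0 < β) (hη : 0 < η)
    (hS : 0 < S) (hS1 : S ≤ 1) (hSS : S * S = η) (hlamβ : lam ≤ β) (hSlam : S < lam) :
    (ρ * η + lam * η) ^ 2 ≤ lam * ((ρ ^ 2 + 2 * ρ + β) * (η * S)) := by
  have hηle : η ≤ S := by nlinarith
  have hηlam : η ≤ lam * S := by nlinarith
  nlinarith [mul_pos hρ hη, mul_pos (hS.trans hSlam) hη, sq_nonneg ρ,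
    mul_le_mul_of_nonneg_left hηlam (sq_nonneg ρ),
    mul_le_mul_of_nonneg_left hηle (mul_nonneg (by nlinarith : (0:ℝ) ≤ 2*ρ*lam) hη.le),
    mul_le_mul_of_nonneg_left hηle (mul_nonneg (mul_nonneg hβ.le (hS.trans hSlam).le) hη.le),
    mul_le_mul_of_nonneg_right hlamβ (mul_nonneg (mul_nonneg (hS.trans hSlam).le hη.le) hη.le)]

set_option maxHeartbeats 2000000 in
/-- Corollary 9 (positive eigendirections, value form): there is a constant `C = C(β, ρ)`
such that, in the normalized-update dynamics with `0 < η ≤ 1`, `2 ≤ T ≤ η^{-1/2}` and all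
eigenvalues of `H` in `[−β, β]` (i.e. `‖H‖ ≤ β` for symmetric `H`), for a unit eigenvector
`e` with eigenvalue `λ > 0` and `λ|α₀| ≤ β√η`, one has `λ(α_t² − α₀²) ≤ C·η^{3/2}`. -/
theorem stmt_14 (β ρ : ℝ) (hβ : 0 < β) (hρ : 0 < ρ) :
    ∃ C : ℝ, 0 < C ∧
      ∀ (d : ℕ) (H : Euc d →L[ℝ] Euc d),
        (∀ v w : Euc d, ⟪H v, w⟫ = ⟪v, H w⟫) →
        ‖H‖ ≤ β →
        ∀ η : ℝ, 0 < η → η ≤ 1 →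
        ∀ T : ℕ, 2 ≤ T → (T : ℝ) ≤ 1 / Real.sqrt η →
        ∀ x g : ℕ → Euc d,
          (∀ t ≤ T, g t ≠ 0) →
          (∀ t < T, x (t + 1) = x t - (η * ‖g t‖⁻¹) • g t) →
          (∀ t ≤ T, ‖g t - H (x t)‖ ≤ ρ / 2 * η ^ 2 * (T : ℝ) ^ 2) →
        ∀ (e : Euc d) (lam : ℝ), ‖e‖ = 1 → H e = lam • e → 0 < lam →
          lam * |⟪e, x 0⟫| ≤ β * Real.sqrt η →
        ∀ t ≤ T,
          lam * (⟪e, x t⟫ ^ 2 - ⟪e, x 0⟫ ^ 2) ≤ C * (η * Real.sqrt η) := by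
  refine ⟨ρ ^ 2 + 4 * ρ + 2 * β + 3, by positivity, ?_⟩
  intro d H hsymm hHβ η hη hη1 T hT2 hTη x g hg hrec herr e lam he hHe hlam h0 t htT
  have hsη : 0 < Real.sqrt η := Real.sqrt_pos.mpr hη
  have hsη1 : Real.sqrt η ≤ 1 := by
    have := Real.sqrt_le_sqrt hη1
    simpa using this
  have hηsq : Real.sqrt η * Real.sqrt η = η := Real.mul_self_sqrt hη.le
  have hηS : 0 < η * Real.sqrt η := mul_pos hη hsη
  have hTη' : (T : ℝ) * Real.sqrt η ≤ 1 := by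
    have h := mul_le_mul_of_nonneg_right hTη hsη.le
    rwa [one_div, inv_mul_cancel₀ hsη.ne'] at h
  have hTle : (T : ℝ) * η ≤ Real.sqrt η := by
    have h := mul_le_mul_of_nonneg_right hTη hη.le
    have h2 : (1 / Real.sqrt η) * η = Real.sqrt η := by
      field_simp
      rw [sq, hηsq]
    linarith [h, h2]
  have hT0 : (0 : ℝ) < (T : ℝ) := by
    have : 0 < T := by omega
    exact_mod_cast this
  have hT2η : (T : ℝ) ^ 2 * η ≤ 1 := by
    nlinarith [hTη', mul_nonneg hT0.le hsη.le, hηsq]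
  have hlamβ : lam ≤ β := by
    have h1 : ‖H e‖ ≤ ‖H‖ * ‖e‖ := H.le_opNorm e
    rw [hHe, norm_smul, he, mul_one, mul_one] at h1
    rw [Real.norm_eq_abs] at h1
    exact le_trans (le_abs_self lam) (h1.trans hHβ)
  obtain ⟨ε, hεdef⟩ : ∃ ε : ℝ, ε = ρ / 2 * η ^ 2 * (T : ℝ) ^ 2 := ⟨_, rfl⟩
  have herr' : ∀ s, s ≤ T → ‖g s - H (x s)‖ ≤ ε := fun s hs => hεdef ▸ herr s hs
  have hε0 : 0 < ε := by
    rw [hεdef]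
    exact mul_pos (mul_pos (by linarith : (0:ℝ) < ρ / 2) (pow_pos hη 2)) (pow_pos hT0 2)
  have hεle : 2 * ε ≤ ρ * η := by
    rw [hεdef]
    nlinarith [hT2η, mul_pos hρ hη]
  -- per-step key facts
  have hkey : ∀ s, s < T →
      (|⟪e, x (s + 1)⟫| ≤ |⟪e, x s⟫| + η) ∧
      (2 * ε ≤ lam * |⟪e, x s⟫| → ⟪e, x (s + 1)⟫ ^ 2 ≤ ⟪e, x s⟫ ^ 2 + η ^ 2) := by
    intro s hs
    have hgs : g s ≠ 0 := hg s hs.le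
    have hgpos : 0 < ‖g s‖ := norm_pos_iff.mpr hgs
    have hxs : x (s + 1) = x s - (η * ‖g s‖⁻¹) • g s := hrec s hs
    have hαs : ⟪e, x (s + 1)⟫ = ⟪e, x s⟫ - η * (‖g s‖⁻¹ * ⟪e, g s⟫) := by
      rw [hxs, inner_sub_right, real_inner_smul_right]; ring
    obtain ⟨u, hu⟩ : ∃ u : ℝ, u = ‖g s‖⁻¹ * ⟪e, g s⟫ := ⟨_, rfl⟩
    rw [← hu] at hαs
    have hinner : |⟪e, g s⟫| ≤ ‖g s‖ := by
      have h := abs_real_inner_le_norm e (g s)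
      rwa [he, one_mul] at h
    have hu1 : |u| ≤ 1 := by
      rw [hu, abs_mul, abs_inv, abs_norm]
      calc ‖g s‖⁻¹ * |⟪e, g s⟫| ≤ ‖g s‖⁻¹ * ‖g s‖ :=
            mul_le_mul_of_nonneg_left hinner (inv_nonneg.mpr hgpos.le)
        _ = 1 := inv_mul_cancel₀ hgpos.ne'
    have hεs : |⟪e, g s - H (x s)⟫| ≤ ε := by
      have h1 := abs_real_inner_le_norm e (g s - H (x s))
      rw [he, one_mul] at h1
      exact h1.trans (herr' s hs.le)
    have hdecomp : ⟪e, g s⟫ = lam * ⟪e, x s⟫ + ⟪e, g s - H (x s)⟫ := by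
      have h2 : ⟪e, H (x s)⟫ = lam * ⟪e, x s⟫ := by
        rw [← hsymm e (x s), hHe, real_inner_smul_left]
      rw [inner_sub_right, h2]; ring
    constructor
    · rw [hαs]
      have h3 : |η * u| ≤ η := by
        rw [abs_mul, abs_of_pos hη]
        nlinarith [hu1]
      have h4 := abs_add_le (⟪e, x s⟫) (-(η * u))
      rw [abs_neg] at h4
      rw [sub_eq_add_neg]
      exact h4.trans (by linarith)
    · intro hbig
      have hαnn : 0 ≤ lam * ⟪e, x s⟫ ^ 2 + ⟪e, g s - H (x s)⟫ * ⟪e, x s⟫ := by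
        have h5 : -(ε * |⟪e, x s⟫|) ≤ ⟪e, g s - H (x s)⟫ * ⟪e, x s⟫ := by
          have h6 := neg_abs_le (⟪e, g s - H (x s)⟫ * ⟪e, x s⟫)
          have h7 : |⟪e, g s - H (x s)⟫ * ⟪e, x s⟫| ≤ ε * |⟪e, x s⟫| := by
            rw [abs_mul]
            exact mul_le_mul_of_nonneg_right hεs (abs_nonneg _)
          linarith
        nlinarith [sq_abs ⟪e, x s⟫, abs_nonneg ⟪e, x s⟫, hbig, hε0.le]
      have huα : 0 ≤ u * ⟪e, x s⟫ := by
        have h8 : u * ⟪e, x s⟫ =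
            ‖g s‖⁻¹ * (lam * ⟪e, x s⟫ ^ 2 + ⟪e, g s - H (x s)⟫ * ⟪e, x s⟫) := by
          rw [hu, hdecomp]; ring
        rw [h8]
        exact mul_nonneg (inv_nonneg.mpr hgpos.le) hαnn
      have hu2 : u ^ 2 ≤ 1 := by nlinarith [hu1, abs_nonneg u, sq_abs u]
      rw [hαs]
      nlinarith [hu2, mul_nonneg hη.le huα, sq_nonneg η, hη.le]
  -- crude growth bound
  have hcrude : ∀ s, s ≤ T → |⟪e, x s⟫| ≤ |⟪e, x 0⟫| + (s : ℝ) * η := by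
    intro s
    induction s with
    | zero => intro _; simp
    | succ n ih =>
      intro hn
      have hn' : n < T := hn
      have h1 := (hkey n hn').1
      have h2 := ih hn'.le
      push_cast
      push_cast at h2
      linarith
  obtain ⟨A, hA⟩ : ∃ A : ℝ, A = 2 * ε / lam + η := ⟨_, rfl⟩
  have hApos : 0 < A := by
    rw [hA]
    exact add_pos (div_pos (by linarith) hlam) hη
  -- main invariant
  have hmain : ∀ s, s ≤ T →
      ⟪e, x s⟫ ^ 2 ≤ max (⟪e, x 0⟫ ^ 2) (A ^ 2) + (s : ℝ) * η ^ 2 := by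
    intro s
    induction s with
    | zero => intro _; simpa using le_max_left (⟪e, x 0⟫ ^ 2) (A ^ 2)
    | succ n ih =>
      intro hn
      have hn' : n < T := hn
      have hcur := ih hn'.le
      by_cases hbig : 2 * ε ≤ lam * |⟪e, x n⟫|
      · have h1 := (hkey n hn').2 hbig
        push_cast
        push_cast at hcur
        linarith
      · push_neg at hbig
        have hαn : |⟪e, x n⟫| < 2 * ε / lam := by
          rw [lt_div_iff₀ hlam]
          linarith [hbig]
        have h1 := (hkey n hn').1
        have h2 : |⟪e, x (n + 1)⟫| ≤ A := by rw [hA]; linarith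
        have h3 : ⟪e, x (n + 1)⟫ ^ 2 ≤ A ^ 2 := by
          rw [← sq_abs ⟪e, x (n + 1)⟫]
          exact pow_le_pow_left₀ (abs_nonneg _) h2 2
        have h4 : A ^ 2 ≤ max (⟪e, x 0⟫ ^ 2) (A ^ 2) := le_max_right _ _
        push_cast
        nlinarith [sq_nonneg η, (Nat.cast_nonneg n : (0:ℝ) ≤ (n : ℝ))]
  have htcast : (t : ℝ) ≤ (T : ℝ) := Nat.cast_le.mpr htT
  have htη : (t : ℝ) * η ≤ Real.sqrt η :=
    le_trans (mul_le_mul_of_nonneg_right htcast hη.le) hTle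
  have h6 : lam * ((t : ℝ) * η ^ 2) ≤ β * (η * Real.sqrt η) := by
    have h8 : lam * ((t : ℝ) * η) ≤ β * Real.sqrt η := by
      have h9 := mul_le_mul hlamβ htη (by positivity) hβ.le
      linarith [h9]
    calc lam * ((t : ℝ) * η ^ 2) = lam * ((t : ℝ) * η) * η := by ring
      _ ≤ β * Real.sqrt η * η := mul_le_mul_of_nonneg_right h8 hη.le
      _ = β * (η * Real.sqrt η) := by ring
  have hβC : β * (η * Real.sqrt η) ≤ (ρ ^ 2 + 4 * ρ + 2 * β + 3) * (η * Real.sqrt η) :=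
    mul_le_mul_of_nonneg_right (by nlinarith [sq_nonneg ρ]) hηS.le
  by_cases hcase : A ≤ |⟪e, x 0⟫|
  · -- initial point outside the escape region
    have hA2 : A ^ 2 ≤ ⟪e, x 0⟫ ^ 2 := by
      rw [← sq_abs ⟪e, x 0⟫]
      exact pow_le_pow_left₀ hApos.le hcase 2
    have h1 := hmain t htT
    rw [max_eq_left hA2] at h1
    have h5 : lam * (⟪e, x t⟫ ^ 2 - ⟪e, x 0⟫ ^ 2) ≤ lam * ((t : ℝ) * η ^ 2) :=
      mul_le_mul_of_nonneg_left (by linarith) hlam.le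
    linarith [h5, h6, hβC]
  · rw [not_le] at hcase
    have hlamA : lam * A = 2 * ε + lam * η := by
      rw [hA]; field_simp
    have hlα0 : lam * |⟪e, x 0⟫| ≤ ρ * η + lam * η := by
      have h1 : lam * |⟪e, x 0⟫| ≤ lam * A :=
        mul_le_mul_of_nonneg_left hcase.le hlam.le
      rw [hlamA] at h1
      linarith [hεle]
    have hηle : η ≤ Real.sqrt η := by nlinarith [hηsq, hsη1, hsη]
    by_cases hsmall : lam ≤ Real.sqrt η
    · -- small eigenvalue: use the crude bound
      have h1 : |⟪e, x t⟫| ≤ |⟪e, x 0⟫| + Real.sqrt η := by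
        have h1' := hcrude t htT
        linarith [htη]
      have hd1 : ⟪e, x t⟫ ^ 2 ≤ (|⟪e, x 0⟫| + Real.sqrt η) ^ 2 := by
        rw [← sq_abs ⟪e, x t⟫]
        exact pow_le_pow_left₀ (abs_nonneg _) h1 2
      have hd : ⟪e, x t⟫ ^ 2 - ⟪e, x 0⟫ ^ 2 ≤ 2 * |⟪e, x 0⟫| * Real.sqrt η + η := by
        have hd2 : (|⟪e, x 0⟫| + Real.sqrt η) ^ 2
            = ⟪e, x 0⟫ ^ 2 + 2 * |⟪e, x 0⟫| * Real.sqrt η + Real.sqrt η * Real.sqrt η := by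
          rw [add_sq, sq_abs]
          ring
        rw [hηsq] at hd2
        linarith [hd1, hd2]
      have h3 : lam * (⟪e, x t⟫ ^ 2 - ⟪e, x 0⟫ ^ 2)
          ≤ 2 * Real.sqrt η * (lam * |⟪e, x 0⟫|) + lam * η := by
        have h3' := mul_le_mul_of_nonneg_left hd hlam.le
        nlinarith [h3']
      have h4 : lam * η ≤ Real.sqrt η * η := mul_le_mul_of_nonneg_right hsmall hη.le
      have f1 : 2 * Real.sqrt η * (lam * |⟪e, x 0⟫|) ≤ 2 * Real.sqrt η * (ρ * η + lam * η) :=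
        mul_le_mul_of_nonneg_left hlα0 (by positivity)
      have f3 : 2 * Real.sqrt η * (lam * η) ≤ 2 * Real.sqrt η * (Real.sqrt η * η) :=
        mul_le_mul_of_nonneg_left h4 (by positivity)
      have f4 : 2 * Real.sqrt η * (Real.sqrt η * η) = 2 * (η * η) := by
        linear_combination 2 * η * hηsq
      have f5 : η * η ≤ η * Real.sqrt η := mul_le_mul_of_nonneg_left hηle hη.le
      have f7 : (2 * ρ + 3) * (η * Real.sqrt η)
          ≤ (ρ ^ 2 + 4 * ρ + 2 * β + 3) * (η * Real.sqrt η) :=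
        mul_le_mul_of_nonneg_right (by nlinarith [sq_nonneg ρ]) hηS.le
      have f2 : 2 * Real.sqrt η * (ρ * η + lam * η)
          = 2 * ρ * (η * Real.sqrt η) + 2 * Real.sqrt η * (lam * η) := by ring
      have f6 : Real.sqrt η * η = η * Real.sqrt η := by ring
      linarith [h3, f1, f2, f3, f4, f5, f6, f7, h4]
    · rw [not_le] at hsmall
      have h2 : ⟪e, x 0⟫ ^ 2 ≤ A ^ 2 := by
        rw [← sq_abs ⟪e, x 0⟫]
        exact pow_le_pow_left₀ (abs_nonneg _) hcase.le 2
      have hmt : ⟪e, x t⟫ ^ 2 ≤ A ^ 2 + (t : ℝ) * η ^ 2 := by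
        have h1 := hmain t htT
        rw [max_eq_right h2] at h1
        exact h1
      have hlA2 : lam * A ^ 2 ≤ (ρ ^ 2 + 2 * ρ + β) * (η * Real.sqrt η) := by
        rw [← mul_le_mul_iff_right₀ hlam]
        have h3 : lam * (lam * A ^ 2) = (2 * ε + lam * η) ^ 2 := by
          rw [hA]; field_simp
        rw [h3]
        have h4 : (2 * ε + lam * η) ^ 2 ≤ (ρ * η + lam * η) ^ 2 := by
          nlinarith [hεle, hε0, hlam, hη, hρ, mul_pos hlam hη, mul_pos hρ hη]
        have h5 := aux_large ρ β lam η (Real.sqrt η) hρ hβ hη hsη hsη1 hηsq hlamβ hsmall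
        linarith [h4, h5]
      have h5 : lam * (⟪e, x t⟫ ^ 2 - ⟪e, x 0⟫ ^ 2) ≤ lam * (A ^ 2 + (t : ℝ) * η ^ 2) :=
        mul_le_mul_of_nonneg_left (by nlinarith [sq_nonneg ⟪e, x 0⟫]) hlam.le
      have h9 : lam * (A ^ 2 + (t : ℝ) * η ^ 2) = lam * A ^ 2 + lam * ((t : ℝ) * η ^ 2) := by
        ring
      have f8 : (ρ ^ 2 + 2 * ρ + 2 * β) * (η * Real.sqrt η)
          ≤ (ρ ^ 2 + 4 * ρ + 2 * β + 3) * (η * Real.sqrt η) :=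
        mul_le_mul_of_nonneg_right (by linarith) hηS.le
      linarith [h5, h9, hlA2, h6, f8]
end
end

section
/- Consider the normalized-update dynamics with approximation error (ρ/2)·η²·T², and let e be a unit eigenvector of H with eigenvalue λ ≤ 0; write α_t = ⟨e, x_t⟩. Then for every t with 0 ≤ t ≤ T: |λ|·((α_t)² − (α₀)²) ≥ −ρ·(ηT)³. -/
open MeasureTheory ProbabilityTheory
open scoped RealInnerProductSpace

noncomputable section

lemma key_step (L a c G E η : ℝ) (hL : 0 ≤ L) (hG : 0 < G) (hη : 0 ≤ η)
    (hc : |c| ≤ G) (hε : |c + L * a| ≤ E) :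
    -(2 * η * E) ≤ L * ((a - η * (G⁻¹ * c)) ^ 2 - a ^ 2) := by
  have hE : 0 ≤ E := le_trans (abs_nonneg _) hε
  have h2 : (c + L * a) * c ≤ E * G := by
    calc (c + L * a) * c ≤ |(c + L * a) * c| := le_abs_self _
      _ = |c + L * a| * |c| := abs_mul _ _
      _ ≤ E * G := mul_le_mul hε hc (abs_nonneg _) hE
  have h1 : L * a * c ≤ E * G := by nlinarith [sq_nonneg c]
  have hGi : (0:ℝ) < G⁻¹ := inv_pos.mpr hG
  have h3 : L * a * (G⁻¹ * c) ≤ E := by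
    have h4 := mul_le_mul_of_nonneg_left h1 hGi.le
    have h5 : G⁻¹ * (E * G) = E := by field_simp
    nlinarith [h4]
  nlinarith [mul_nonneg hL (sq_nonneg (η * (G⁻¹ * c))),
    mul_le_mul_of_nonneg_left h3 (by positivity : (0:ℝ) ≤ 2 * η)]

/-- Corollary 10 (negative eigendirections, value form): in the normalized-update dynamics
with approximation error `(ρ/2)η²T²`, along a unit eigenvector `e` with eigenvalue
`λ ≤ 0`, one has `|λ|(α_t² − α₀²) ≥ −ρ(ηT)³`. -/
theorem stmt_15 (d : ℕ) (H : Euc d →L[ℝ] Euc d)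
    (hsym : ∀ v w : Euc d, ⟪H v, w⟫ = ⟪v, H w⟫)
    (η ρ : ℝ) (hη : 0 < η) (hρ : 0 < ρ) (T : ℕ)
    (x g : ℕ → Euc d)
    (hgne : ∀ t ≤ T, g t ≠ 0)
    (hrec : ∀ t < T, x (t + 1) = x t - (η * ‖g t‖⁻¹) • g t)
    (happ : ∀ t ≤ T, ‖g t - H (x t)‖ ≤ ρ / 2 * η ^ 2 * (T : ℝ) ^ 2)
    (e : Euc d) (he : ‖e‖ = 1) (lam : ℝ) (heig : H e = lam • e) (hlam : lam ≤ 0) :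
    ∀ t ≤ T,
      -(ρ * (η * (T : ℝ)) ^ 3) ≤ |lam| * (⟪e, x t⟫ ^ 2 - ⟪e, x 0⟫ ^ 2) := by
  have key : ∀ s < T, -(ρ * η ^ 3 * (T:ℝ) ^ 2) ≤
      |lam| * (⟪e, x (s+1)⟫ ^ 2 - ⟪e, x s⟫ ^ 2) := by
    intro s hsT
    have hG : 0 < ‖g s‖ := norm_pos_iff.mpr (hgne s hsT.le)
    have hc : |⟪e, g s⟫| ≤ ‖g s‖ := by
      have h := abs_real_inner_le_norm e (g s)
      rwa [he, one_mul] at h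
    have hHe : ⟪e, H (x s)⟫ = lam * ⟪e, x s⟫ := by
      rw [← hsym e (x s), heig, real_inner_smul_left]
    have hε : |⟪e, g s⟫ + (-lam) * ⟪e, x s⟫| ≤ ρ / 2 * η ^ 2 * (T:ℝ) ^ 2 := by
      have h := abs_real_inner_le_norm e (g s - H (x s))
      rw [he, one_mul, inner_sub_right, hHe] at h
      have h' := h.trans (happ s hsT.le)
      have hx : ⟪e, g s⟫ + (-lam) * ⟪e, x s⟫ = ⟪e, g s⟫ - lam * ⟪e, x s⟫ := by ring
      rw [hx]; exact h'
    have hrec' : ⟪e, x (s+1)⟫ = ⟪e, x s⟫ - η * (‖g s‖⁻¹ * ⟪e, g s⟫) := by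
      rw [hrec s hsT, inner_sub_right, real_inner_smul_right]; ring
    have hk := key_step (-lam) (⟪e, x s⟫) (⟪e, g s⟫) (‖g s‖)
      (ρ / 2 * η ^ 2 * (T:ℝ) ^ 2) η (by linarith) hG hη.le hc hε
    rw [abs_of_nonpos hlam, hrec']
    have heq : -(2 * η * (ρ / 2 * η ^ 2 * (T:ℝ) ^ 2)) = -(ρ * η ^ 3 * (T:ℝ) ^ 2) := by
      ring
    linarith [hk]
  have main : ∀ s ≤ T, -((s:ℝ) * (ρ * η ^ 3 * (T:ℝ) ^ 2)) ≤
      |lam| * (⟪e, x s⟫ ^ 2 - ⟪e, x 0⟫ ^ 2) := by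
    intro s hs
    induction s with
    | zero => simp
    | succ n ih =>
      have hn : n ≤ T := Nat.le_of_succ_le hs
      have h1 := ih hn
      have h2 := key n (Nat.lt_of_succ_le hs)
      push_cast
      nlinarith [h1, h2]
  intro t ht
  have h := main t ht
  have htR : (t:ℝ) ≤ (T:ℝ) := Nat.cast_le.mpr ht
  have hT0 : (0:ℝ) ≤ (T:ℝ) := Nat.cast_nonneg T
  have hstep : (t:ℝ) * (ρ * η ^ 3 * (T:ℝ) ^ 2) ≤ ρ * (η * (T:ℝ)) ^ 3 := by
    have h0 : (0:ℝ) ≤ ρ * η ^ 3 * (T:ℝ) ^ 2 := by positivity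
    have h4 := mul_le_mul_of_nonneg_right htR h0
    nlinarith [h4]
  linarith
end
end

section
/- Let β, γ, ρ, η > 0 and N₀ ∈ ℕ with N₀ ≥ 1. Let (g_t)_{t=1}^{N₀} be vectors in ℝ^d, let e be a unit vector, write a_t = ⟨e, g_t⟩, and suppose: (i) a_{t+1} = a_t·(1 + γη/‖g_t‖) + b_t for all 1 ≤ t < N₀, where (b_t) are real numbers with |b_t| ≤ ρ·η²·t; (ii) ‖g_t‖ ≤ 2β·√η for all 1 ≤ t < N₀; (iii) a₁ ≠ 0 and ρ·η²·N₀/|a₁| ≤ γ·√η/(4β). Then for every t with 1 ≤ t ≤ N₀: |a_t| ≥ |a₁|·(1 + γ·√η/(4β))^{t−1}. -/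
open MeasureTheory ProbabilityTheory
open scoped RealInnerProductSpace

noncomputable section

/-- Geometric blow-up of the gradient component along the most negative direction
(while all gradients stay small): `|a_t| ≥ |a₁|(1 + γ√η/(4β))^{t−1}`. -/
theorem stmt_16 (d : ℕ) (β γ ρ η : ℝ)
    (hβ : 0 < β) (hγ : 0 < γ) (hρ : 0 < ρ) (hη : 0 < η)
    (N₀ : ℕ) (hN₀ : 1 ≤ N₀)
    (g : ℕ → Euc d) (e : Euc d) (he : ‖e‖ = 1) (b : ℕ → ℝ)
    (hrec : ∀ t, 1 ≤ t → t < N₀ →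
      ⟪e, g (t + 1)⟫ = ⟪e, g t⟫ * (1 + γ * η / ‖g t‖) + b t)
    (hb : ∀ t, 1 ≤ t → t < N₀ → |b t| ≤ ρ * η ^ 2 * t)
    (hgb : ∀ t, 1 ≤ t → t < N₀ → ‖g t‖ ≤ 2 * β * Real.sqrt η)
    (ha1 : ⟪e, g 1⟫ ≠ 0)
    (hcond : ρ * η ^ 2 * N₀ / |⟪e, g 1⟫| ≤ γ * Real.sqrt η / (4 * β)) :
    ∀ t, 1 ≤ t → t ≤ N₀ →
      |⟪e, g 1⟫| * (1 + γ * Real.sqrt η / (4 * β)) ^ (t - 1) ≤ |⟪e, g t⟫| := by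
  have hs : 0 < γ * Real.sqrt η / (4 * β) := by positivity
  set s := γ * Real.sqrt η / (4 * β) with hsdef
  have ha1pos : 0 < |⟪e, g 1⟫| := abs_pos.mpr ha1
  have hcond' : ρ * η ^ 2 * N₀ ≤ |⟪e, g 1⟫| * s := by
    rw [div_le_iff₀ ha1pos] at hcond; linarith
  have hsq : Real.sqrt η * Real.sqrt η = η := Real.mul_self_sqrt hη.le
  have hsqpos : 0 < Real.sqrt η := Real.sqrt_pos.mpr hη
  intro t
  induction t with
  | zero => intro h; omega
  | succ n ih =>
    intro _ hle
    rcases Nat.eq_zero_or_pos n with hn | hn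
    · subst hn; simp
    · have hnN : n < N₀ := by omega
      have IH := ih hn (le_of_lt hnN)
      have hpow1 : (1 : ℝ) ≤ (1 + s) ^ (n - 1) :=
        one_le_pow₀ (by linarith)
      have hanpos : 0 < |⟪e, g n⟫| :=
        lt_of_lt_of_le (by positivity) IH
      have hCS : |⟪e, g n⟫| ≤ ‖g n‖ := by
        have h := abs_real_inner_le_norm e (g n)
        rwa [he, one_mul] at h
      have hgpos : 0 < ‖g n‖ := lt_of_lt_of_le hanpos hCS
      have hgub := hgb n hn hnN
      have hstep : 2 * s ≤ γ * η / ‖g n‖ := by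
        rw [le_div_iff₀ hgpos, hsdef]
        have h1 : 2 * (γ * Real.sqrt η / (4 * β)) * ‖g n‖
            ≤ 2 * (γ * Real.sqrt η / (4 * β)) * (2 * β * Real.sqrt η) := by
          apply mul_le_mul_of_nonneg_left hgub (by positivity)
        have h2 : 2 * (γ * Real.sqrt η / (4 * β)) * (2 * β * Real.sqrt η) = γ * η := by
          field_simp
          linear_combination 4 * hsq
        linarith
      have hbn : |b n| ≤ |⟪e, g 1⟫| * s := by
        have h1 := hb n hn hnN
        have h2 : (n : ℝ) ≤ (N₀ : ℝ) := by exact_mod_cast hnN.le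
        have h3 : ρ * η ^ 2 * (n : ℝ) ≤ ρ * η ^ 2 * (N₀ : ℝ) :=
          mul_le_mul_of_nonneg_left h2 (by positivity)
        linarith
      have hcpos : 0 < 1 + γ * η / ‖g n‖ := by positivity
      have habs : |⟪e, g n⟫| * (1 + γ * η / ‖g n‖) - |b n| ≤ |⟪e, g (n + 1)⟫| := by
        rw [hrec n hn hnN]
        have h := abs_add_le (⟪e, g n⟫ * (1 + γ * η / ‖g n‖) + b n) (-(b n))
        rw [add_neg_cancel_right, abs_neg, abs_mul, abs_of_pos hcpos] at h
        linarith
      have hpown : (1 + s) ^ ((n + 1) - 1) = (1 + s) ^ (n - 1) * (1 + s) := by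
        rw [← pow_succ]
        congr 1
        omega
      rw [hpown]
      have hIH' : |⟪e, g 1⟫| ≤ |⟪e, g n⟫| := by
        nlinarith [IH, ha1pos]
      have f1 : |⟪e, g 1⟫| * s ≤ |⟪e, g n⟫| * s :=
        mul_le_mul_of_nonneg_right hIH' hs.le
      have f2 : |⟪e, g n⟫| * (2 * s) ≤ |⟪e, g n⟫| * (γ * η / ‖g n‖) :=
        mul_le_mul_of_nonneg_left hstep hanpos.le
      have f3 : |⟪e, g 1⟫| * (1 + s) ^ (n - 1) * (1 + s) ≤ |⟪e, g n⟫| * (1 + s) :=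
        mul_le_mul_of_nonneg_right IH (by linarith)
      nlinarith [f1, f2, f3, habs, hbn]
end
end

section
/- For every β > 0 and ρ > 0 there exists a constant C > 0, depending only on β and ρ, such that the following holds. Consider the normalized-update dynamics with approximation error (ρ/2)·η²·T², where 0 < η ≤ 1, 2 ≤ T ≤ η^{-1/2}, and all eigenvalues of H lie in [−β, β]. Define the quadratic objective f̃(x) = (1/2)·⟨x, Hx⟩, and suppose ‖H x₀‖² ≤ β²·η and ‖H x_T‖² ≥ 3β²·η. Then f̃(x_T) − f̃(x₀) ≤ −β·η + C·d·η^{3/2}. -/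
open MeasureTheory ProbabilityTheory
open scoped RealInnerProductSpace

noncomputable section

set_option maxHeartbeats 1000000 in
/-- Lemma 12 (value decrease near a saddle for the quadratic objective): there is a
constant `C = C(β, ρ)` such that, in the normalized-update dynamics with `0 < η ≤ 1`,
`2 ≤ T ≤ η^{-1/2}`, all eigenvalues of `H` in `[−β, β]` (i.e. `‖H‖ ≤ β` for symmetric
`H`), if `‖Hx₀‖² ≤ β²η` and `‖Hx_T‖² ≥ 3β²η`, then the quadratic objective
`f̃(x) = ½⟨x, Hx⟩` satisfies `f̃(x_T) − f̃(x₀) ≤ −βη + C·d·η^{3/2}`. -/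
theorem stmt_18 (β ρ : ℝ) (hβ : 0 < β) (hρ : 0 < ρ) :
    ∃ C : ℝ, 0 < C ∧
      ∀ (d : ℕ) (H : Euc d →L[ℝ] Euc d),
        (∀ v w : Euc d, ⟪H v, w⟫ = ⟪v, H w⟫) →
        ‖H‖ ≤ β →
        ∀ η : ℝ, 0 < η → η ≤ 1 →
        ∀ T : ℕ, 2 ≤ T → (T : ℝ) ≤ 1 / Real.sqrt η →
        ∀ x g : ℕ → Euc d,
          (∀ t ≤ T, g t ≠ 0) →
          (∀ t < T, x (t + 1) = x t - (η * ‖g t‖⁻¹) • g t) →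
          (∀ t ≤ T, ‖g t - H (x t)‖ ≤ ρ / 2 * η ^ 2 * (T : ℝ) ^ 2) →
          ‖H (x 0)‖ ^ 2 ≤ β ^ 2 * η →
          3 * β ^ 2 * η ≤ ‖H (x T)‖ ^ 2 →
          1 / 2 * ⟪x T, H (x T)⟫ - 1 / 2 * ⟪x 0, H (x 0)⟫ ≤
            -(β * η) + C * d * (η * Real.sqrt η) := by
  refine ⟨β + ρ, by positivity, ?_⟩
  intro d H hsym hHβ η hη hη1 T hT2 hTs x g hg hstep happ h0 hT
  have hs0 : 0 < Real.sqrt η := Real.sqrt_pos.mpr hη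
  have hs2 : Real.sqrt η ^ 2 = η := Real.sq_sqrt hη.le
  set s : ℝ := Real.sqrt η with hsdef
  rcases Nat.eq_zero_or_pos d with hd | hd
  · exfalso
    subst hd
    have hx0 : x T = 0 := Subsingleton.elim _ _
    rw [hx0] at hT
    simp only [map_zero, norm_zero] at hT
    nlinarith [mul_pos (mul_pos hβ hβ) hη]
  have hd1 : (1:ℝ) ≤ d := by exact_mod_cast hd
  set u : ℕ → Euc d := fun t => ‖g t‖⁻¹ • g t with hu
  have hunorm : ∀ t, t ≤ T → ‖u t‖ = 1 := by
    intro t ht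
    have hgt : g t ≠ 0 := hg t ht
    simp only [hu, norm_smul, norm_inv, norm_norm]
    exact inv_mul_cancel₀ (norm_ne_zero_iff.mpr hgt)
  have hxstep : ∀ t, t < T → x (t+1) = x t - η • u t := by
    intro t ht; rw [hstep t ht, mul_smul]
  set ε : ℝ := ρ / 2 * η ^ 2 * (T:ℝ) ^ 2 with hε
  have hε0 : 0 ≤ ε := by positivity
  -- per-step decrease of the quadratic
  have hdec : ∀ t, t < T → 1/2 * ⟪x (t+1), H (x (t+1))⟫ - 1/2 * ⟪x t, H (x t)⟫ ≤
      -(η * ‖H (x t)‖) + 2*η*ε + β*η^2/2 := by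
    intro t ht
    have hgt : g t ≠ 0 := hg t ht.le
    have hut : ‖u t‖ = 1 := hunorm t ht.le
    have hexp : ⟪x (t+1), H (x (t+1))⟫ =
        ⟪x t, H (x t)⟫ - 2*η*⟪H (x t), u t⟫ + η^2*⟪u t, H (u t)⟫ := by
      rw [hxstep t ht]
      simp only [map_sub, ContinuousLinearMap.map_smul, inner_sub_left, inner_sub_right,
        real_inner_smul_left, real_inner_smul_right]
      rw [← hsym (x t) (u t), real_inner_comm (u t) (H (x t))]
      ring
    have hBg : ⟪g t, u t⟫ = ‖g t‖ := by
      have hne : ‖g t‖ ≠ 0 := norm_ne_zero_iff.mpr hgt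
      rw [hu]
      simp only [real_inner_smul_right, real_inner_self_eq_norm_sq]
      field_simp
    have herr : |⟪H (x t) - g t, u t⟫| ≤ ε := by
      calc |⟪H (x t) - g t, u t⟫| ≤ ‖H (x t) - g t‖ * ‖u t‖ := abs_real_inner_le_norm _ _
        _ = ‖g t - H (x t)‖ := by rw [hut, norm_sub_rev]; ring
        _ ≤ ε := happ t ht.le
    have hnormg : ‖H (x t)‖ - ε ≤ ‖g t‖ := by
      have h1 := norm_sub_norm_le (H (x t)) (g t)
      have h2 : ‖H (x t) - g t‖ ≤ ε := by rw [norm_sub_rev]; exact happ t ht.le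
      linarith
    have hsplit : ⟪H (x t), u t⟫ = ⟪g t, u t⟫ + ⟪H (x t) - g t, u t⟫ := by
      rw [inner_sub_left]; ring
    have hB : ‖H (x t)‖ - 2*ε ≤ ⟪H (x t), u t⟫ := by
      have := (abs_le.mp herr).1
      rw [hsplit, hBg]
      linarith
    have hC : ⟪u t, H (u t)⟫ ≤ β := by
      calc ⟪u t, H (u t)⟫ ≤ ‖u t‖ * ‖H (u t)‖ := real_inner_le_norm _ _
        _ = ‖H (u t)‖ := by rw [hut, one_mul]
        _ ≤ ‖H‖ * ‖u t‖ := H.le_opNorm (u t)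
        _ ≤ β := by rw [hut, mul_one]; exact hHβ
    rw [hexp]
    nlinarith [mul_le_mul_of_nonneg_left hB hη.le, mul_le_mul_of_nonneg_left hC (sq_nonneg η)]
  -- per-step growth of the gradient norm
  have hstepn : ∀ t, t < T → ‖H (x (t+1))‖ ≤ ‖H (x t)‖ + β*η := by
    intro t ht
    rw [hxstep t ht]
    have hmap : H (x t - η • u t) = H (x t) - η • H (u t) := by
      simp [map_sub, ContinuousLinearMap.map_smul]
    rw [hmap]
    have h1 : ‖η • H (u t)‖ ≤ β * η := by
      rw [norm_smul, Real.norm_eq_abs, abs_of_pos hη]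
      have h2 := H.le_opNorm (u t)
      rw [hunorm t ht.le, mul_one] at h2
      nlinarith
    calc ‖H (x t) - η • H (u t)‖ ≤ ‖H (x t)‖ + ‖η • H (u t)‖ := norm_sub_le _ _
      _ ≤ _ := by linarith
  have hgrow : ∀ k t, t + k = T → ‖H (x T)‖ ≤ ‖H (x t)‖ + (k:ℝ) * (β*η) := by
    intro k
    induction k with
    | zero => intro t ht; simp [← ht]
    | succ k ih =>
      intro t ht
      have ht' : t < T := by omega
      have h1 := ih (t+1) (by omega)
      have h2 := hstepn t ht'
      push_cast
      push_cast at h1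
      linarith
  set a : ℝ := ‖H (x T)‖ with ha
  set b : ℝ := ‖H (x 0)‖ with hb
  have htlow : ∀ t, t < T → a - ((T:ℝ) - t) * (β*η) ≤ ‖H (x t)‖ := by
    intro t ht
    have h1 := hgrow (T - t) t (by omega)
    have h2 : ((T - t : ℕ) : ℝ) = (T:ℝ) - t := by
      push_cast [Nat.cast_sub ht.le]; ring
    rw [h2] at h1
    linarith
  -- telescoping
  have htel := Finset.sum_range_sub (fun t => 1/2 * ⟪x t, H (x t)⟫) T
  have hsum : ∑ t ∈ Finset.range T, ((1:ℝ)/2 * ⟪x (t+1), H (x (t+1))⟫ - 1/2 * ⟪x t, H (x t)⟫)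
      ≤ ∑ t ∈ Finset.range T, (-(η * (a - ((T:ℝ)-t)*(β*η))) + 2*η*ε + β*η^2/2) := by
    apply Finset.sum_le_sum
    intro t htmem
    have ht := Finset.mem_range.mp htmem
    have h1 := hdec t ht
    have h2 := htlow t ht
    have h3 : -(η * ‖H (x t)‖) ≤ -(η * (a - ((T:ℝ)-t)*(β*η))) := by
      have := mul_le_mul_of_nonneg_left h2 hη.le
      linarith
    linarith
  have hgauss : ∑ t ∈ Finset.range T, ((T:ℝ) - (t:ℝ)) = (T:ℝ)*((T:ℝ)+1)/2 := by
    rw [Finset.sum_sub_distrib, Finset.sum_const, Finset.card_range, nsmul_eq_mul]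
    have h := Finset.sum_range_id_mul_two T
    have h' : (∑ i ∈ Finset.range T, (i:ℝ)) * 2 = (T:ℝ) * ((T:ℝ) - 1) := by
      have := congrArg (Nat.cast : ℕ → ℝ) h
      push_cast [Nat.cast_sub (by omega : 1 ≤ T)] at this
      linarith
    push_cast
    linarith
  have hRHS : ∑ t ∈ Finset.range T, (-(η * (a - ((T:ℝ)-t)*(β*η))) + 2*η*ε + β*η^2/2)
      = (T:ℝ)*(-(η*a) + 2*η*ε + β*η^2/2) + η*(β*η)*((T:ℝ)*((T:ℝ)+1)/2) := by
    have heq : ∀ t : ℕ, -(η * (a - ((T:ℝ)-t)*(β*η))) + 2*η*ε + β*η^2/2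
        = (-(η*a) + 2*η*ε + β*η^2/2) + (η*(β*η))*((T:ℝ)-(t:ℝ)) := by intro t; ring
    simp_rw [heq]
    rw [Finset.sum_add_distrib, Finset.sum_const, Finset.card_range, ← Finset.mul_sum, hgauss]
    push_cast
    ring
  -- collect scalar facts
  have hb' : b ≤ β * s := by
    have hb0 : (0:ℝ) ≤ b := norm_nonneg _
    have hbs : 0 < β * s := by positivity
    nlinarith [h0, hs2]
  have hab : a ≤ β * s + (T:ℝ) * (β*η) := by
    have := hgrow T 0 (by omega)
    push_cast at this
    linarith
  have ha2 : 3*β^2*η ≤ a^2 := hT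
  have ha0 : (0:ℝ) ≤ a := norm_nonneg _
  have hTs' : (T:ℝ) * s ≤ 1 := by
    exact (le_div_iff₀ hs0).mp hTs
  have hT0 : (0:ℝ) ≤ (T:ℝ) := Nat.cast_nonneg T
  have hs1 : s ≤ 1 := by
    rw [hsdef]
    calc Real.sqrt η ≤ Real.sqrt 1 := Real.sqrt_le_sqrt hη1
      _ = 1 := Real.sqrt_one
  -- the main scalar inequality
  set v : ℝ := η * (T:ℝ) with hv
  have hv0 : 0 ≤ v := by positivity
  have hvs : v ≤ s := by
    have : η * (T:ℝ) = s * ((T:ℝ) * s) := by rw [← hs2]; ring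
    rw [hv, this]
    nlinarith
  have habv : a ≤ β * s + β * v := by rw [hv]; nlinarith [hab]
  have hkey : 2*β*(v*a) - β^2*v^2 ≥ 2*β^2*s^2 := by
    have h1 : 0 ≤ β*v - (a - β*s) := by nlinarith
    have h2 : 0 ≤ a + β*s - β*v := by
      have := mul_le_mul_of_nonneg_left hvs hβ.le
      linarith
    nlinarith [mul_nonneg h1 h2, ha2, hs2]
  have hkey2 : β*s^2 ≤ v*a - β*v^2/2 := by nlinarith [hkey]
  have hform : (T:ℝ)*(-(η*a) + 2*η*ε + β*η^2/2) + η*(β*η)*((T:ℝ)*((T:ℝ)+1)/2)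
      = -(v*a) + β/2*v^2 + β*η*v + ρ*v^3 := by
    rw [hε, hv]; ring
  have hfinal : -(v*a) + β/2*v^2 + β*η*v + ρ*v^3 ≤ -(β*η) + (β+ρ)*(η*s) := by
    have h5 : v^3 ≤ s^3 := pow_le_pow_left₀ hv0 hvs 3
    have h5' : ρ*v^3 ≤ ρ*s^3 := mul_le_mul_of_nonneg_left h5 hρ.le
    have h6 : β*η*v ≤ β*η*s := mul_le_mul_of_nonneg_left hvs (by positivity)
    have hs3 : s^3 = η*s := by rw [← hs2]; ring
    have hs2' : -(β*s^2) = -(β*η) := by rw [hs2]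
    rw [hs3] at h5'
    linarith [hkey2, hs2']
  have hd2 : (β+ρ)*(η*s) ≤ (β+ρ)*(d:ℝ)*(η*s) := by
    have h1 : (β+ρ) ≤ (β+ρ)*(d:ℝ) := le_mul_of_one_le_right (by positivity) hd1
    exact mul_le_mul_of_nonneg_right h1 (by positivity)
  calc 1 / 2 * ⟪x T, H (x T)⟫ - 1 / 2 * ⟪x 0, H (x 0)⟫
      = ∑ t ∈ Finset.range T, ((1:ℝ)/2 * ⟪x (t+1), H (x (t+1))⟫ - 1/2 * ⟪x t, H (x t)⟫) := htel.symm
    _ ≤ ∑ t ∈ Finset.range T, (-(η * (a - ((T:ℝ)-t)*(β*η))) + 2*η*ε + β*η^2/2) := hsum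
    _ = (T:ℝ)*(-(η*a) + 2*η*ε + β*η^2/2) + η*(β*η)*((T:ℝ)*((T:ℝ)+1)/2) := hRHS
    _ = -(v*a) + β/2*v^2 + β*η*v + ρ*v^3 := hform
    _ ≤ -(β*η) + (β+ρ)*(η*s) := hfinal
    _ ≤ -(β*η) + (β+ρ)*(d:ℝ)*(η*s) := by linarith
end
end
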